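/- arXiv:1905.04551 — 4 statements merged into one kernel-verified Lean document; each statement's English description precedes it below -/
import Mathlib

section
/- For every odd integer k ≥ 3, the set M = {v_i u_i^1, v_i u_i^2, v_i u_i^3 : 1 ≤ i ≤ k} of edges of the flower snark J_k forms a perfect pseudo-matching whose components are k disjoint copies of K_{1,3}, and the graph J_k / M obtained by contracting each component of M to a single vertex is a multigraph on k vertices v_1', ..., v_k' consisting of three edge-disjoint Hamiltonian cycles v_1' v_2' ... v_k' v_1'; in particular J_k / M is planar. -/
open SimpleGraph Classical

/-- The claw `K_{1,3}`: vertex `0` is the center, adjacent to `1,2,3`. -/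
def clawGraph : SimpleGraph (Fin 4) :=
  SimpleGraph.fromEdgeSet {s((0:Fin 4),1), s((0:Fin 4),2), s((0:Fin 4),3)}

/-- A graph is cubic if every vertex has exactly 3 neighbours. -/
def IsCubic {V : Type*} (G : SimpleGraph V) : Prop :=
  ∀ v : V, (G.neighborSet v).ncard = 3

/-- `M` is a perfect pseudo-matching of `G`: a spanning subgraph each of whose
connected components is isomorphic to `K₂` or to the claw `K_{1,3}`. -/
def IsPerfectPseudoMatching {V : Type*} (G M : SimpleGraph V) : Prop :=
  M ≤ G ∧ ∀ c : M.ConnectedComponent,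
    Nonempty ((M.induce c.supp) ≃g (⊤ : SimpleGraph (Fin 2))) ∨
    Nonempty ((M.induce c.supp) ≃g clawGraph)

/-- `C` is a cycle, given as a subgraph of `G`: nonempty edge set, every vertex of
degree `0` or `2`, and connected on its support. -/
def IsCycleSubgraph {V : Type*} (G C : SimpleGraph V) : Prop :=
  C ≤ G ∧ C.edgeSet.Nonempty ∧
  (∀ v : V, (C.neighborSet v).ncard = 0 ∨ (C.neighborSet v).ncard = 2) ∧
  (∀ u v : V, u ∈ C.support → v ∈ C.support → C.Reachable u v)

/-- A dominating cycle: every edge of `G` has an endpoint on `C`. -/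
def IsDominatingCycle {V : Type*} (G C : SimpleGraph V) : Prop :=
  IsCycleSubgraph G C ∧ ∀ u v : V, G.Adj u v → u ∈ C.support ∨ v ∈ C.support

/-- `C` is a connected component of `D` which is a cycle. -/
def IsComponentCycleOf {V : Type*} (D C : SimpleGraph V) : Prop :=
  IsCycleSubgraph D C ∧ ∀ u v : V, u ∈ C.support → D.Adj u v → C.Adj u v

/-- A proper 3-edge-colouring of `G`. -/
def IsProper3EdgeColoring {V : Type*} (G : SimpleGraph V) (c : Sym2 V → Fin 3) : Prop :=
  ∀ e ∈ G.edgeSet, ∀ f ∈ G.edgeSet, e ≠ f → (∃ v : V, v ∈ e ∧ v ∈ f) → c e ≠ c f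

def Proper3EdgeColorable {V : Type*} (G : SimpleGraph V) : Prop :=
  ∃ c : Sym2 V → Fin 3, IsProper3EdgeColoring G c

/-- A cycle double cover of `G` containing, among its members, specified cycles. -/
def IsCycleDoubleCover {V : Type*} (G : SimpleGraph V) {n : ℕ}
    (F : Fin n → SimpleGraph V) : Prop :=
  (∀ i, IsCycleSubgraph G (F i)) ∧
  ∀ e ∈ G.edgeSet, {i : Fin n | e ∈ (F i).edgeSet}.ncard = 2

/-- A cycle in the contracted multigraph `G/M`: a cyclic sequence of pairwise distinct
edges of `G \ E(M)` joining pairwise distinct components of `M`. -/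
structure ContractedCycle {V : Type*} (G M : SimpleGraph V) where
  n : ℕ
  hn : 0 < n
  edge : Fin n → Sym2 V
  vtx : Fin n → M.ConnectedComponent
  mem : ∀ i, edge i ∈ G.edgeSet \ M.edgeSet
  edge_inj : Function.Injective edge
  vtx_inj : Function.Injective vtx
  ends : ∀ i : Fin n, ∃ x y : V, edge i = s(x, y) ∧
    M.connectedComponentMk x = vtx i ∧
    M.connectedComponentMk y = vtx (i + ⟨1 % n, Nat.mod_lt _ hn⟩)

/-- The edge set of a contracted cycle. -/
def ContractedCycle.edges {V : Type*} {G M : SimpleGraph V} (c : ContractedCycle G M) :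
    Set (Sym2 V) := Set.range c.edge

/-- A decomposition of the contracted multigraph `G/M` into cycles, compatible with the
transition system `T_M` induced by the cycles of `G \ E(M)` (i.e. no cycle of the
decomposition contains two distinct edges sharing a vertex of `G`). -/
def IsCompatibleCycleDecomposition {V : Type*} (G M : SimpleGraph V)
    (D : Set (ContractedCycle G M)) : Prop :=
  (∀ e ∈ G.edgeSet \ M.edgeSet, ∃ c ∈ D, e ∈ c.edges) ∧
  (∀ c ∈ D, ∀ c' ∈ D, c ≠ c' → Disjoint c.edges c'.edges) ∧
  (∀ c ∈ D, ∀ e ∈ c.edges, ∀ f ∈ c.edges, e ≠ f → ¬ ∃ v : V, v ∈ e ∧ v ∈ f)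

/-- The intersection graph of a family of cycles of `G/M`: two distinct cycles are
adjacent iff they meet in a vertex of `G/M`. -/
def intersectionGraph {V : Type*} (G M : SimpleGraph V) (D : Set (ContractedCycle G M)) :
    SimpleGraph D where
  Adj a b := a ≠ b ∧ ∃ w : M.ConnectedComponent,
    w ∈ Set.range a.1.vtx ∧ w ∈ Set.range b.1.vtx
  symm := by
    constructor
    rintro a b ⟨hne, w, h1, h2⟩
    exact ⟨hne.symm, w, h2, h1⟩
  loopless := by
    constructor
    rintro a ⟨hne, -⟩
    exact hne rfl

/-- `H` is a minor of `G` (branch-set definition). -/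
def IsMinorOf {α β : Type*} (H : SimpleGraph α) (G : SimpleGraph β) : Prop :=
  ∃ f : α → Set β, (∀ a, (f a).Nonempty) ∧ (∀ a, (G.induce (f a)).Connected) ∧
    (Pairwise (Function.onFun Disjoint f)) ∧
    ∀ a b, H.Adj a b → ∃ x ∈ f a, ∃ y ∈ f b, G.Adj x y

/-- Planarity, via Wagner's theorem: no `K₅` and no `K_{3,3}` minor. -/
def IsPlanar {β : Type*} (G : SimpleGraph β) : Prop :=
  ¬ IsMinorOf (⊤ : SimpleGraph (Fin 5)) G ∧
  ¬ IsMinorOf (completeBipartiteGraph (Fin 3) (Fin 3)) G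

/-- The simple graph underlying the contraction `G/M`. -/
def contractedSimple {V : Type*} (G M : SimpleGraph V) : SimpleGraph M.ConnectedComponent where
  Adj c d := c ≠ d ∧ ∃ x y : V, G.Adj x y ∧ ¬ M.Adj x y ∧
    M.connectedComponentMk x = c ∧ M.connectedComponentMk y = d
  symm := by
    constructor
    rintro c d ⟨hne, x, y, h1, h2, h3, h4⟩
    exact ⟨hne.symm, y, x, h1.symm, fun h => h2 h.symm, h4, h3⟩
  loopless := by
    constructor
    rintro c ⟨hne, -⟩
    exact hne rfl

/-- Number of endpoints (with multiplicity) of the edge `e` lying in the part `c`. -/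
noncomputable def endCount {V α : Type*} (e : Sym2 V) (g : V → α) (c : α) : ℕ :=
  Sym2.lift ⟨fun x y => (if g x = c then 1 else 0) + (if g y = c then 1 else 0),
    fun x y => by dsimp; omega⟩ e

/-- The degree of a component `c` of `M` in the contracted multigraph `G/M`. -/
noncomputable def contractedDegree {V : Type*} (G M : SimpleGraph V)
    (c : M.ConnectedComponent) : ℕ :=
  ∑ᶠ e ∈ (G.edgeSet \ M.edgeSet), endCount e (M.connectedComponentMk) c

/-- The flower graph `J_k`, on vertices `v_i = Sum.inl i` and `u_i^{j+1} = Sum.inr (i,j)`. -/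
def flowerGraph (k : ℕ) (hk : 0 < k) : SimpleGraph (Fin k ⊕ Fin k × Fin 3) :=
  let one : Fin k := ⟨1 % k, Nat.mod_lt 1 hk⟩
  let zero : Fin k := ⟨0, hk⟩
  let lst : Fin k := ⟨k - 1, by omega⟩
  SimpleGraph.fromEdgeSet (
    {e | ∃ (i : Fin k) (j : Fin 3), e = s(Sum.inl i, Sum.inr (i, j))} ∪
    {e | ∃ i : Fin k, e = s(Sum.inr (i, 0), Sum.inr (i + one, 0))} ∪
    {e | ∃ i : Fin k, i.val + 1 < k ∧
      (e = s(Sum.inr (i, 1), Sum.inr (i + one, 1)) ∨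
       e = s(Sum.inr (i, 2), Sum.inr (i + one, 2)))} ∪
    {s(Sum.inr (lst, 1), Sum.inr (zero, 2)), s(Sum.inr (lst, 2), Sum.inr (zero, 1))})

/-- The set of spokes `v_i u_i^j` of the flower graph, as a spanning subgraph. -/
def flowerSpokes (k : ℕ) : SimpleGraph (Fin k ⊕ Fin k × Fin 3) :=
  SimpleGraph.fromEdgeSet {e | ∃ (i : Fin k) (j : Fin 3), e = s(Sum.inl i, Sum.inr (i, j))}


/-! ### Auxiliary machinery -/

section Aux

open Sum

/-- The cycle graph on `Fin k`. -/
private def cycG (k : ℕ) [NeZero k] : SimpleGraph (Fin k) where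
  Adj i j := i ≠ j ∧ (j = i + 1 ∨ i = j + 1)
  symm := ⟨fun i j h => ⟨h.1.symm, h.2.symm⟩⟩
  loopless := ⟨fun i h => h.1 rfl⟩

private lemma cycG_ext (k : ℕ) (hk : 3 ≤ k) [NeZero k] (A : Set (Fin k))
    (hA : ((cycG k).induce A).Connected)
    {x1 x2 x3 y1 y2 y3 : Fin k}
    (hx1 : x1 ∈ A) (hx2 : x2 ∈ A) (hx3 : x3 ∈ A)
    (hy1 : y1 ∉ A) (hy2 : y2 ∉ A) (hy3 : y3 ∉ A)
    (h12 : y1 ≠ y2) (h13 : y1 ≠ y3) (h23 : y2 ≠ y3)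
    (ha1 : (cycG k).Adj x1 y1) (ha2 : (cycG k).Adj x2 y2) (ha3 : (cycG k).Adj x3 y3) :
    False := by
  set a := y1 with ha
  have hone : (1 : Fin k).val = 1 := by
    rw [Fin.val_one']; exact Nat.mod_eq_of_lt (by omega)
  have dinj : ∀ z w : Fin k, (z - a).val = (w - a).val → z = w := by
    intro z w h
    have h2 : z - a = w - a := Fin.ext h
    have h3 := congrArg (· + a) h2
    simpa using h3
  have dpos : ∀ z : Fin k, z ≠ a → 1 ≤ (z - a).val := by
    intro z hz
    have h0 : z - a ≠ 0 := sub_ne_zero_of_ne hz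
    have h1 : (z - a).val ≠ 0 := by
      intro hh
      exact h0 (Fin.ext (by simp [hh]))
    omega
  have add1 : ∀ x w : Fin k, w ≠ a → w = x + 1 → (w - a).val = (x - a).val + 1 := by
    intro x w hw hxw
    have hsub : w - a = (x - a) + 1 := by rw [hxw]; abel
    have hv : (w - a).val = ((x - a).val + 1) % k := by
      rw [hsub, Fin.val_add, hone]
    have hne0 : (w - a).val ≠ 0 := by
      have := dpos w hw; omega
    have hlt := (x - a).isLt
    rcases Nat.lt_or_ge ((x - a).val + 1) k with h' | h'
    · rw [Nat.mod_eq_of_lt h'] at hv; exact hv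
    · exfalso
      have hxk : (x - a).val + 1 = k := by omega
      rw [hxk, Nat.mod_self] at hv
      exact hne0 hv
  have step : ∀ x w : Fin k, x ≠ a → w ≠ a → (cycG k).Adj x w →
      (w - a).val = (x - a).val + 1 ∨ (x - a).val = (w - a).val + 1 := by
    intro x w hx hw hadj
    rcases hadj.2 with h | h
    · exact Or.inl (add1 x w hw h)
    · exact Or.inr (add1 w x hx h)
  have ivt : ∀ (u w : ↥A) (p : ((cycG k).induce A).Walk u w) (m : ℕ),
      (u.val - a).val ≤ m → m ≤ (w.val - a).val → ∃ z ∈ A, (z - a).val = m := by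
    intro u w p
    induction p with
    | @nil u0 => exact fun m h1 h2 => ⟨u0.val, u0.2, by omega⟩
    | @cons u' v' w' h p ih =>
      intro m h1 h2
      rcases Nat.eq_or_lt_of_le h1 with he | hlt
      · exact ⟨u'.val, u'.2, he⟩
      · have hu : u'.val ≠ a := fun hh => hy1 (hh ▸ u'.2)
        have hv : v'.val ≠ a := fun hh => hy1 (hh ▸ v'.2)
        have hadj : (cycG k).Adj u'.val v'.val := h
        rcases step u'.val v'.val hu hv hadj with hs | hs
        · exact ih m (by omega) h2
        · exact ih m (by omega) h2
  have ivt' : ∀ x ∈ A, ∀ y ∈ A, ∀ m : ℕ,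
      (x - a).val ≤ m → m ≤ (y - a).val → ∃ z ∈ A, (z - a).val = m := by
    intro x hx y hy m h1 h2
    obtain ⟨p⟩ := hA.preconnected ⟨x, hx⟩ ⟨y, hy⟩
    exact ivt _ _ p m h1 h2
  have dich : ∀ x ∈ A, ∀ y : Fin k, y ∉ A → y ≠ a → (cycG k).Adj x y →
      (y = x + 1 ∧ ∀ z ∈ A, (z - a).val ≤ (x - a).val) ∨
      (x = y + 1 ∧ ∀ z ∈ A, (x - a).val ≤ (z - a).val) := by
    intro x hx y hyA hya hadj
    rcases hadj.2 with h | h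
    · left
      refine ⟨h, fun z hz => ?_⟩
      by_contra hlt
      push_neg at hlt
      have hdy := add1 x y hya h
      obtain ⟨z', hz', hdz'⟩ := ivt' x hx z hz ((x - a).val + 1) (by omega) (by omega)
      have hzy : z' = y := dinj z' y (by omega)
      exact hyA (hzy ▸ hz')
    · right
      refine ⟨h, fun z hz => ?_⟩
      by_contra hlt
      push_neg at hlt
      have hxa : x ≠ a := fun hh => hy1 (hh ▸ hx)
      have hdy := add1 y x hxa h
      obtain ⟨z', hz', hdz'⟩ := ivt' z hz x hx ((x - a).val - 1) (by omega) (by omega)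
      have hzy : z' = y := dinj z' y (by omega)
      exact hyA (hzy ▸ hz')
  have hy2a : y2 ≠ a := fun h => h12 h.symm
  have hy3a : y3 ≠ a := fun h => h13 h.symm
  rcases ha1.2 with hc | hc
  · -- `a = x1 + 1` : `x1` is the argmax
    have hmax1 : (x1 - a).val = k - 1 := by
      have h0 : (x1 - a) + 1 = 0 := by rw [hc]; abel
      have h0v : ((x1 - a).val + 1) % k = 0 := by
        have h0' := congrArg Fin.val h0
        rw [Fin.val_add, hone] at h0'
        simpa using h0'
      have hlt := (x1 - a).isLt
      rcases Nat.lt_or_ge ((x1 - a).val + 1) k with h' | h'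
      · rw [Nat.mod_eq_of_lt h'] at h0v; omega
      · omega
    have hmaxU : ∀ x y : Fin k, x ∈ A → y = x + 1 →
        (∀ z ∈ A, (z - a).val ≤ (x - a).val) → y = a := by
      intro x y hx hxy hmax
      have h1 : k - 1 ≤ (x - a).val := by have := hmax x1 hx1; omega
      have h2 := (x - a).isLt
      have hxx1 : x = x1 := dinj x x1 (by omega)
      rw [hxy, hxx1, ← hc]
    rcases dich x2 hx2 y2 hy2 hy2a ha2 with ⟨he2, hm2⟩ | ⟨he2, hm2⟩
    · exact h12 (hmaxU x2 y2 hx2 he2 hm2).symm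
    · rcases dich x3 hx3 y3 hy3 hy3a ha3 with ⟨he3, hm3⟩ | ⟨he3, hm3⟩
      · exact h13 (hmaxU x3 y3 hx3 he3 hm3).symm
      · have hx23 : x2 = x3 := dinj _ _ (Nat.le_antisymm (hm2 x3 hx3) (hm3 x2 hx2))
        exact h23 (add_right_cancel (he2.symm.trans (hx23.trans he3)))
  · -- `x1 = a + 1` : `x1` is the argmin
    have hmin1 : (x1 - a).val = 1 := by
      have h0 : x1 - a = 1 := by rw [hc]; abel
      rw [h0, hone]
    have hminU : ∀ x y : Fin k, x ∈ A → x = y + 1 →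
        (∀ z ∈ A, (x - a).val ≤ (z - a).val) → y = a := by
      intro x y hx hxy hmin
      have h1 : (x - a).val ≤ 1 := by have := hmin x1 hx1; omega
      have h2 : 1 ≤ (x - a).val := dpos x (fun hh => hy1 (hh ▸ hx))
      have hxx1 : x = x1 := dinj x x1 (by omega)
      have h3 : y + 1 = a + 1 := hxy.symm.trans (hxx1.trans hc)
      exact add_right_cancel h3
    rcases dich x2 hx2 y2 hy2 hy2a ha2 with ⟨he2, hm2⟩ | ⟨he2, hm2⟩
    · rcases dich x3 hx3 y3 hy3 hy3a ha3 with ⟨he3, hm3⟩ | ⟨he3, hm3⟩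
      · have hx23 : x2 = x3 := dinj _ _ (Nat.le_antisymm (hm3 x2 hx2) (hm2 x3 hx3))
        exact h23 (by rw [he2, he3, hx23])
      · exact h13 (hminU x3 y3 hx3 he3 hm3).symm
    · exact h12 (hminU x2 y2 hx2 he2 hm2).symm

private lemma isMinorOf_of_iso {α β γ : Type*} {H : SimpleGraph α} {G : SimpleGraph β}
    {G' : SimpleGraph γ} (e : G ≃g G') (h : IsMinorOf H G) : IsMinorOf H G' := by
  obtain ⟨f, h1, h2, h3, h4⟩ := h
  refine ⟨fun a => (e : β → γ) '' f a, fun a => (h1 a).image _, fun a => ?_,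
    fun a b hab => ?_, fun a b hH => ?_⟩
  · refine (h2 a).map
      ⟨fun x => ⟨e x.1, Set.mem_image_of_mem _ x.2⟩, fun hxy => e.map_adj_iff.mpr hxy⟩ ?_
    rintro ⟨y, hy⟩
    obtain ⟨x, hx, rfl⟩ := hy
    exact ⟨⟨x, hx⟩, rfl⟩
  · exact (Set.disjoint_image_iff e.injective).mpr (h3 hab)
  · obtain ⟨x, hx, y, hy, hxy⟩ := h4 a b hH
    exact ⟨e x, Set.mem_image_of_mem _ hx, e y, Set.mem_image_of_mem _ hy,
      e.map_adj_iff.mpr hxy⟩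

private lemma cycG_planar (k : ℕ) (hk : 3 ≤ k) [NeZero k] : IsPlanar (cycG k) := by
  constructor
  · rintro ⟨f, hne, hconn, hdisj, hadj⟩
    have had : ∀ i : Fin 5, i ≠ 0 → ∃ x ∈ f 0, ∃ y ∈ f i, (cycG k).Adj x y :=
      fun i hi => hadj 0 i (by simpa using Ne.symm hi)
    obtain ⟨x1, hx1, y1, hy1, ha1⟩ := had 1 (by decide)
    obtain ⟨x2, hx2, y2, hy2, ha2⟩ := had 2 (by decide)
    obtain ⟨x3, hx3, y3, hy3, ha3⟩ := had 3 (by decide)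
    have hnotin : ∀ i : Fin 5, i ≠ 0 → ∀ y, y ∈ f i → y ∉ f 0 :=
      fun i hi y hy hy0 => Set.disjoint_left.mp (hdisj hi) hy hy0
    have hdiff : ∀ i j : Fin 5, i ≠ j → ∀ y z, y ∈ f i → z ∈ f j → y ≠ z := by
      intro i j hij y z hy hz hyz
      exact Set.disjoint_left.mp (hdisj hij) hy (by rw [hyz]; exact hz)
    exact cycG_ext k hk (f 0) (hconn 0) hx1 hx2 hx3
      (hnotin 1 (by decide) y1 hy1) (hnotin 2 (by decide) y2 hy2)
      (hnotin 3 (by decide) y3 hy3)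
      (hdiff 1 2 (by decide) y1 y2 hy1 hy2) (hdiff 1 3 (by decide) y1 y3 hy1 hy3)
      (hdiff 2 3 (by decide) y2 y3 hy2 hy3) ha1 ha2 ha3
  · rintro ⟨f, hne, hconn, hdisj, hadj⟩
    have had : ∀ j : Fin 3, ∃ x ∈ f (Sum.inl 0), ∃ y ∈ f (Sum.inr j), (cycG k).Adj x y :=
      fun j => hadj (Sum.inl 0) (Sum.inr j) (Or.inl ⟨rfl, rfl⟩)
    obtain ⟨x1, hx1, y1, hy1, ha1⟩ := had 0
    obtain ⟨x2, hx2, y2, hy2, ha2⟩ := had 1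
    obtain ⟨x3, hx3, y3, hy3, ha3⟩ := had 2
    have hnotin : ∀ j : Fin 3, ∀ y, y ∈ f (Sum.inr j) → y ∉ f (Sum.inl 0) := by
      intro j y hy hy0
      have hd : Disjoint (f (Sum.inr j)) (f (Sum.inl 0)) :=
        hdisj (show (Sum.inr j : Fin 3 ⊕ Fin 3) ≠ Sum.inl 0 by simp)
      exact Set.disjoint_left.mp hd hy hy0
    have hdiff : ∀ j j' : Fin 3, j ≠ j' → ∀ y z,
        y ∈ f (Sum.inr j) → z ∈ f (Sum.inr j') → y ≠ z := by
      intro j j' hjj y z hy hz hyz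
      have hd : Disjoint (f (Sum.inr j)) (f (Sum.inr j')) :=
        hdisj (show (Sum.inr j : Fin 3 ⊕ Fin 3) ≠ Sum.inr j' by simpa using hjj)
      exact Set.disjoint_left.mp hd hy (by rw [hyz]; exact hz)
    exact cycG_ext k hk (f (Sum.inl 0)) (hconn _) hx1 hx2 hx3
      (hnotin 0 y1 hy1) (hnotin 1 y2 hy2) (hnotin 2 y3 hy3)
      (hdiff 0 1 (by decide) y1 y2 hy1 hy2) (hdiff 0 2 (by decide) y1 y3 hy1 hy3)
      (hdiff 1 2 (by decide) y2 y3 hy2 hy3) ha1 ha2 ha3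

/-! #### Flower graph specifics -/

private def spokeSet (k : ℕ) : Set (Sym2 (Fin k ⊕ Fin k × Fin 3)) :=
  {e | ∃ (i : Fin k) (j : Fin 3), e = s(Sum.inl i, Sum.inr (i, j))}

private def flowerSet (k : ℕ) (hk0 : 0 < k) : Set (Sym2 (Fin k ⊕ Fin k × Fin 3)) :=
  {e | ∃ (i : Fin k) (j : Fin 3), e = s(Sum.inl i, Sum.inr (i, j))} ∪
  {e | ∃ i : Fin k, e = s(Sum.inr (i, 0), Sum.inr (i + ⟨1 % k, Nat.mod_lt 1 hk0⟩, 0))} ∪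
  {e | ∃ i : Fin k, i.val + 1 < k ∧
    (e = s(Sum.inr (i, 1), Sum.inr (i + ⟨1 % k, Nat.mod_lt 1 hk0⟩, 1)) ∨
     e = s(Sum.inr (i, 2), Sum.inr (i + ⟨1 % k, Nat.mod_lt 1 hk0⟩, 2)))} ∪
  {s(Sum.inr (⟨k - 1, by omega⟩, 1), Sum.inr (⟨0, hk0⟩, 2)),
   s(Sum.inr (⟨k - 1, by omega⟩, 2), Sum.inr (⟨0, hk0⟩, 1))}

private lemma flowerGraph_eq {k : ℕ} (hk0 : 0 < k) :
    flowerGraph k hk0 = SimpleGraph.fromEdgeSet (flowerSet k hk0) := rfl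

private lemma flowerSpokes_eq (k : ℕ) :
    flowerSpokes k = SimpleGraph.fromEdgeSet (spokeSet k) := rfl

private lemma spokes_adj (k : ℕ) (a b : Fin k ⊕ Fin k × Fin 3) :
    (flowerSpokes k).Adj a b ↔
      (∃ i j, a = Sum.inl i ∧ b = Sum.inr (i, j)) ∨
      (∃ i j, b = Sum.inl i ∧ a = Sum.inr (i, j)) := by
  rw [flowerSpokes_eq, SimpleGraph.fromEdgeSet_adj]
  constructor
  · rintro ⟨⟨i, j, hij⟩, hne⟩
    rcases Sym2.eq_iff.mp hij with ⟨h1, h2⟩ | ⟨h1, h2⟩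
    · exact Or.inl ⟨i, j, h1, h2⟩
    · exact Or.inr ⟨i, j, h2, h1⟩
  · rintro (⟨i, j, rfl, rfl⟩ | ⟨i, j, rfl, rfl⟩)
    · exact ⟨⟨i, j, rfl⟩, by simp⟩
    · exact ⟨⟨i, j, Sym2.eq_swap⟩, by simp⟩

private def idx (k : ℕ) : Fin k ⊕ Fin k × Fin 3 → Fin k := Sum.elim id Prod.fst

private lemma idx_adj (k : ℕ) {a b : Fin k ⊕ Fin k × Fin 3}
    (h : (flowerSpokes k).Adj a b) : idx k a = idx k b := by
  rcases (spokes_adj k a b).mp h with ⟨i, j, rfl, rfl⟩ | ⟨i, j, rfl, rfl⟩ <;> rfl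

private lemma idx_walk (k : ℕ) {a b : Fin k ⊕ Fin k × Fin 3}
    (p : (flowerSpokes k).Walk a b) : idx k a = idx k b := by
  induction p with
  | nil => rfl
  | cons h _ ih => rw [idx_adj k h]; exact ih

private def q (k : ℕ) : (flowerSpokes k).ConnectedComponent → Fin k :=
  SimpleGraph.ConnectedComponent.lift (idx k) fun _ _ p _ => idx_walk k p

private lemma mk_inr (k : ℕ) (i : Fin k) (j : Fin 3) :
    (flowerSpokes k).connectedComponentMk (Sum.inr (i, j)) =
      (flowerSpokes k).connectedComponentMk (Sum.inl i) :=
  (SimpleGraph.ConnectedComponent.connectedComponentMk_eq_of_adj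
    ((spokes_adj k _ _).mpr (Or.inl ⟨i, j, rfl, rfl⟩))).symm

private lemma mk_inr_eq {k : ℕ} {i0 i : Fin k} {j : Fin 3}
    (h : (flowerSpokes k).connectedComponentMk (Sum.inr (i0, j)) =
      (flowerSpokes k).connectedComponentMk (Sum.inl i)) : i0 = i := by
  have h2 := congrArg (q k) h
  simpa [q, idx] using h2

private lemma cmp_bij (k : ℕ) :
    Function.Bijective
      (fun i : Fin k => (flowerSpokes k).connectedComponentMk (Sum.inl i)) := by
  constructor
  · intro i i' h
    have h2 := congrArg (q k) h
    simpa [q, idx] using h2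
  · intro c
    obtain ⟨v, hv⟩ := c.exists_rep
    cases v with
    | inl i => exact ⟨i, hv⟩
    | inr p =>
      obtain ⟨i, j⟩ := p
      exact ⟨i, (mk_inr k i j).symm.trans hv⟩

private lemma mem_supp_cmp (k : ℕ) (i : Fin k) (v : Fin k ⊕ Fin k × Fin 3) :
    v ∈ ((flowerSpokes k).connectedComponentMk (Sum.inl i)).supp ↔
      v = Sum.inl i ∨ ∃ j, v = Sum.inr (i, j) := by
  rw [SimpleGraph.ConnectedComponent.mem_supp_iff]
  constructor
  · intro h
    cases v with
    | inl i' =>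
      left
      have hq := congrArg (q k) h
      have : i' = i := by simpa [q, idx] using hq
      rw [this]
    | inr p =>
      obtain ⟨i', j⟩ := p
      right
      have hq := congrArg (q k) h
      have : i' = i := by simpa [q, idx] using hq
      exact ⟨j, by rw [this]⟩
  · rintro (rfl | ⟨j, rfl⟩)
    · rfl
    · exact mk_inr k i j

private lemma claw_adj (a b : Fin 4) :
    clawGraph.Adj a b ↔ (a = 0 ∧ b ≠ 0) ∨ (b = 0 ∧ a ≠ 0) := by
  have hcg : clawGraph =
      SimpleGraph.fromEdgeSet {s((0 : Fin 4), 1), s((0 : Fin 4), 2), s((0 : Fin 4), 3)} := rfl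
  rw [hcg, SimpleGraph.fromEdgeSet_adj]
  simp only [Set.mem_insert_iff, Set.mem_singleton_iff, Sym2.eq_iff]
  revert a b
  decide

private def clawVec {k : ℕ} (i : Fin k) : Fin 4 → Fin k ⊕ Fin k × Fin 3 :=
  ![Sum.inl i, Sum.inr (i, 0), Sum.inr (i, 1), Sum.inr (i, 2)]

private def clawIso {k : ℕ} (i : Fin k) :
    ((flowerSpokes k).induce
      ((flowerSpokes k).connectedComponentMk (Sum.inl i)).supp) ≃g clawGraph where
  toEquiv :=
    { toFun := fun v => Sum.elim (fun _ => (0 : Fin 4)) (fun p => p.2.succ) v.1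
      invFun := fun n => ⟨clawVec i n, by
        rw [mem_supp_cmp]
        fin_cases n
        · exact Or.inl rfl
        · exact Or.inr ⟨0, rfl⟩
        · exact Or.inr ⟨1, rfl⟩
        · exact Or.inr ⟨2, rfl⟩⟩
      left_inv := by
        rintro ⟨v, hv⟩
        rcases (mem_supp_cmp k i v).mp hv with rfl | ⟨j, rfl⟩
        · rfl
        · fin_cases j <;> rfl
      right_inv := by
        intro n
        fin_cases n <;> rfl }
  map_rel_iff' := by
    rintro ⟨v, hv⟩ ⟨w, hw⟩
    rcases (mem_supp_cmp k i v).mp hv with rfl | ⟨j, rfl⟩ <;>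
      rcases (mem_supp_cmp k i w).mp hw with rfl | ⟨j', rfl⟩
    · refine iff_of_false (fun h => ?_) (fun h => ?_)
      · rcases (claw_adj _ _).mp h with ⟨-, h2⟩ | ⟨-, h2⟩ <;> exact h2 rfl
      · rcases (spokes_adj k _ _).mp h with ⟨i0, j0, h1, h2⟩ | ⟨i0, j0, h1, h2⟩ <;>
          simp at h1 h2
    · exact iff_of_true
        ((claw_adj _ _).mpr (Or.inl ⟨rfl, Fin.succ_ne_zero j'⟩))
        ((spokes_adj k _ _).mpr (Or.inl ⟨i, j', rfl, rfl⟩))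
    · exact iff_of_true
        ((claw_adj _ _).mpr (Or.inr ⟨rfl, Fin.succ_ne_zero j⟩))
        ((spokes_adj k _ _).mpr (Or.inr ⟨i, j, rfl, rfl⟩))
    · refine iff_of_false (fun h => ?_) (fun h => ?_)
      · rcases (claw_adj _ _).mp h with ⟨h1, -⟩ | ⟨h1, -⟩
        · exact Fin.succ_ne_zero j h1
        · exact Fin.succ_ne_zero j' h1
      · rcases (spokes_adj k _ _).mp h with ⟨i0, j0, h1, h2⟩ | ⟨i0, j0, h1, h2⟩ <;>
          simp at h1 h2

private lemma spokes_le {k : ℕ} (hk0 : 0 < k) : flowerSpokes k ≤ flowerGraph k hk0 :=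
  (SimpleGraph.fromEdgeSet_mono fun e he => Or.inl (Or.inl (Or.inl he)) :
    SimpleGraph.fromEdgeSet (spokeSet k) ≤ SimpleGraph.fromEdgeSet (flowerSet k hk0))

/-! #### Fin arithmetic -/

private lemma fin_addone_val {k : ℕ} (hk : 3 ≤ k) (i : Fin k) {p : 1 % k < k} :
    ((i + ⟨1 % k, p⟩ : Fin k)).val = (i.val + 1) % k := by
  have h1 : ((⟨1 % k, p⟩ : Fin k)).val = 1 := Nat.mod_eq_of_lt (by omega)
  rw [Fin.val_add, h1]

private lemma mod_cases {k : ℕ} (hk : 3 ≤ k) (m : ℕ) (hm : m < k) :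
    (m + 1) % k = if m + 1 < k then m + 1 else 0 := by
  split
  · exact Nat.mod_eq_of_lt ‹_›
  · have h : m + 1 = k := by omega
    rw [h, Nat.mod_self]

private lemma ne_addone {k : ℕ} (hk : 3 ≤ k) (i : Fin k) {p : 1 % k < k} :
    i ≠ i + ⟨1 % k, p⟩ := by
  intro h
  have hlt := i.isLt
  have hv := congrArg Fin.val h
  rw [fin_addone_val hk, mod_cases hk i.val hlt] at hv
  split at hv <;> omega

private lemma lst_addone {k : ℕ} (hk : 3 ≤ k) (i : Fin k) (hi : k ≤ i.val + 1)
    {p : 1 % k < k} : i + (⟨1 % k, p⟩ : Fin k) = ⟨0, by omega⟩ := by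
  apply Fin.ext
  rw [fin_addone_val hk]
  show (i.val + 1) % k = 0
  have hlt := i.isLt
  have h : i.val + 1 = k := by omega
  rw [h]
  exact Nat.mod_self k

/-! #### The three edge classes -/

private def gswap : Fin 3 → Fin 3 := fun a => if a = 1 then 2 else 1

private lemma gswap_ne {a : Fin 3} (ha : a ≠ 0) : gswap a ≠ a := by
  fin_cases a
  · exact absurd rfl ha
  · decide
  · decide

private def gfun (k : ℕ) (hk : 3 ≤ k) (a : Fin 3) (i : Fin k) :
    Sym2 (Fin k ⊕ Fin k × Fin 3) :=
  if a ≠ 0 ∧ k ≤ i.val + 1 then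
    s(Sum.inr (i, a), Sum.inr (⟨0, lt_of_lt_of_le (by decide) hk⟩, gswap a))
  else
    s(Sum.inr (i, a), Sum.inr (i + ⟨1 % k, Nat.mod_lt 1 (lt_of_lt_of_le (by decide) hk)⟩, a))

private lemma gfun_ends {k : ℕ} (hk : 3 ≤ k) (a : Fin 3) (i : Fin k) :
    ∃ x y : Fin k ⊕ Fin k × Fin 3, gfun k hk a i = s(x, y) ∧
      (flowerSpokes k).connectedComponentMk x =
        (flowerSpokes k).connectedComponentMk (Sum.inl i) ∧
      (flowerSpokes k).connectedComponentMk y =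
        (flowerSpokes k).connectedComponentMk
          (Sum.inl (i + ⟨1 % k, Nat.mod_lt 1 (lt_of_lt_of_le (by decide) hk)⟩)) := by
  unfold gfun
  split
  · rename_i h
    refine ⟨_, _, rfl, mk_inr k i a, ?_⟩
    rw [lst_addone hk i h.2]
    exact mk_inr k _ _
  · exact ⟨_, _, rfl, mk_inr k i a, mk_inr k _ _⟩

private lemma gfun_eq_iff {k : ℕ} (hk : 3 ≤ k) {a b : Fin 3} {i i' : Fin k}
    (h : gfun k hk a i = gfun k hk b i') : a = b ∧ i = i' := by
  have hki := i.isLt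
  have hki' := i'.isLt
  unfold gfun at h
  split_ifs at h with h1 h2 h2
  · rcases Sym2.eq_iff.mp h with ⟨hx, hy⟩ | ⟨hx, hy⟩ <;>
      simp only [Sum.inr.injEq, Prod.mk.injEq] at hx hy
    · exact ⟨hx.2, hx.1⟩
    · exfalso
      have h0 : i.val = 0 := by rw [hx.1]
      omega
  · exfalso
    rcases Sym2.eq_iff.mp h with ⟨hx, hy⟩ | ⟨hx, hy⟩ <;>
      simp only [Sum.inr.injEq, Prod.mk.injEq] at hx hy <;>
      exact gswap_ne h1.1 (hy.2.trans hx.2.symm)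
  · exfalso
    rcases Sym2.eq_iff.mp h with ⟨hx, hy⟩ | ⟨hx, hy⟩ <;>
      simp only [Sum.inr.injEq, Prod.mk.injEq] at hx hy
    · exact gswap_ne h2.1 (hy.2.symm.trans hx.2)
    · exact gswap_ne h2.1 (hx.2.symm.trans hy.2)
  · rcases Sym2.eq_iff.mp h with ⟨hx, hy⟩ | ⟨hx, hy⟩ <;>
      simp only [Sum.inr.injEq, Prod.mk.injEq] at hx hy
    · exact ⟨hx.2, hx.1⟩
    · exfalso
      have e1 : i.val = (i'.val + 1) % k := by rw [hx.1, fin_addone_val hk]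
      have e2 : i'.val = (i.val + 1) % k := by rw [← hy.1, fin_addone_val hk]
      rw [mod_cases hk _ hki'] at e1
      rw [mod_cases hk _ hki] at e2
      split at e1 <;> split at e2 <;> omega

private lemma union_eq {k : ℕ} (hk : 3 ≤ k) (hk0 : 0 < k) :
    (⋃ a : Fin 3, Set.range (gfun k hk a)) =
      (flowerGraph k hk0).edgeSet \ (flowerSpokes k).edgeSet := by
  rw [flowerGraph_eq hk0, flowerSpokes_eq, SimpleGraph.edgeSet_fromEdgeSet,
    SimpleGraph.edgeSet_fromEdgeSet]
  ext e
  simp only [Set.mem_iUnion, Set.mem_range, Set.mem_diff, Set.mem_setOf_eq,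
    flowerSet, spokeSet, Set.mem_union, Set.mem_insert_iff, Set.mem_singleton_iff]
  constructor
  · rintro ⟨a, i, rfl⟩
    unfold gfun
    split_ifs with hcond
    · obtain ⟨ha0, hik⟩ := hcond
      have hi : i = ⟨k - 1, Nat.sub_lt (by omega) Nat.one_pos⟩ :=
        Fin.ext (by have := i.isLt; show i.val = k - 1; omega)
      rw [hi]
      refine ⟨⟨?_, ?_⟩, ?_⟩
      · refine Or.inr ?_
        fin_cases a
        · exact absurd rfl ha0
        · exact Or.inl rfl
        · exact Or.inr rfl
      · intro hdia
        rw [Sym2.mem_diagSet, Sym2.mk_isDiag_iff] at hdia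
        simp only [Sum.inr.injEq, Prod.mk.injEq] at hdia
        exact gswap_ne ha0 hdia.2.symm
      · rintro ⟨⟨i0, j0, hsp⟩, -⟩
        rcases Sym2.eq_iff.mp hsp with ⟨hh, -⟩ | ⟨-, hh⟩ <;> simp at hh
    · refine ⟨⟨?_, ?_⟩, ?_⟩
      · by_cases ha0 : a = 0
        · subst ha0
          exact Or.inl (Or.inl (Or.inr ⟨i, rfl⟩))
        · have hlt : i.val + 1 < k := by
            rcases Nat.lt_or_ge (i.val + 1) k with h' | h'
            · exact h'
            · exact absurd ⟨ha0, h'⟩ hcond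
          refine Or.inl (Or.inr ?_)
          fin_cases a
          · exact absurd rfl ha0
          · exact ⟨i, hlt, Or.inl rfl⟩
          · exact ⟨i, hlt, Or.inr rfl⟩
      · intro hdia
        rw [Sym2.mem_diagSet, Sym2.mk_isDiag_iff] at hdia
        simp only [Sum.inr.injEq, Prod.mk.injEq] at hdia
        exact ne_addone hk i hdia.1
      · rintro ⟨⟨i0, j0, hsp⟩, -⟩
        rcases Sym2.eq_iff.mp hsp with ⟨hh, -⟩ | ⟨-, hh⟩ <;> simp at hh
  · rintro ⟨⟨hmem, hdiag⟩, hnsp⟩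
    rcases hmem with ((hA | hB) | hC) | hD
    · exact absurd ⟨hA, hdiag⟩ hnsp
    · obtain ⟨i, rfl⟩ := hB
      refine ⟨0, i, ?_⟩
      unfold gfun
      rw [if_neg (by rintro ⟨h0, -⟩; exact h0 rfl)]
    · obtain ⟨i, hlt, hC | hC⟩ := hC
      · refine ⟨1, i, ?_⟩
        unfold gfun
        rw [if_neg (fun hcc => absurd hcc.2 (by omega)), hC]
      · refine ⟨2, i, ?_⟩
        unfold gfun
        rw [if_neg (fun hcc => absurd hcc.2 (by omega)), hC]
    · rcases hD with hD | hD
      · refine ⟨1, ⟨k - 1, by omega⟩, ?_⟩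
        unfold gfun
        rw [if_pos ⟨by decide, by show k ≤ k - 1 + 1; omega⟩, hD]
        rfl
      · refine ⟨2, ⟨k - 1, by omega⟩, ?_⟩
        unfold gfun
        rw [if_pos ⟨by decide, by show k ≤ k - 1 + 1; omega⟩, hD]
        rfl

/-! #### The contracted graph is a cycle -/

private lemma contracted_adj {k : ℕ} (hk : 3 ≤ k) (hk0 : 0 < k) (i i' : Fin k) :
    (contractedSimple (flowerGraph k hk0) (flowerSpokes k)).Adj
      ((flowerSpokes k).connectedComponentMk (Sum.inl i))
      ((flowerSpokes k).connectedComponentMk (Sum.inl i')) ↔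
    (i ≠ i' ∧ (i' = i + ⟨1 % k, Nat.mod_lt 1 hk0⟩ ∨ i = i' + ⟨1 % k, Nat.mod_lt 1 hk0⟩)) := by
  have hinj := (cmp_bij k).1
  constructor
  · rintro ⟨hne, x, y, hJ, hnM, hx, hy⟩
    have hii : i ≠ i' := fun hh => hne (by rw [hh])
    refine ⟨hii, ?_⟩
    rw [flowerGraph_eq hk0, SimpleGraph.fromEdgeSet_adj] at hJ
    obtain ⟨hmem, hxy⟩ := hJ
    rcases hmem with ((hA | hB) | hC) | hD
    · refine absurd ?_ hnM
      rw [flowerSpokes_eq, SimpleGraph.fromEdgeSet_adj]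
      exact ⟨hA, hxy⟩
    · obtain ⟨i0, he⟩ := hB
      rcases Sym2.eq_iff.mp he with ⟨h1, h2⟩ | ⟨h1, h2⟩
      · rw [h1] at hx; rw [h2] at hy
        have e1 := mk_inr_eq hx
        have e2 := mk_inr_eq hy
        left; rw [← e2, ← e1]
      · rw [h1] at hx; rw [h2] at hy
        have e1 := mk_inr_eq hx
        have e2 := mk_inr_eq hy
        right; rw [← e1, ← e2]
    · obtain ⟨i0, hlt, he | he⟩ := hC <;>
      · rcases Sym2.eq_iff.mp he with ⟨h1, h2⟩ | ⟨h1, h2⟩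
        · rw [h1] at hx; rw [h2] at hy
          have e1 := mk_inr_eq hx
          have e2 := mk_inr_eq hy
          left; rw [← e2, ← e1]
        · rw [h1] at hx; rw [h2] at hy
          have e1 := mk_inr_eq hx
          have e2 := mk_inr_eq hy
          right; rw [← e1, ← e2]
    · simp only [Set.mem_insert_iff, Set.mem_singleton_iff] at hD
      rcases hD with he | he <;>
      · rcases Sym2.eq_iff.mp he with ⟨h1, h2⟩ | ⟨h1, h2⟩
        · rw [h1] at hx; rw [h2] at hy
          have e1 := mk_inr_eq hx
          have e2 := mk_inr_eq hy
          left; rw [← e2, ← e1]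
          exact (lst_addone hk _ (by show k ≤ k - 1 + 1; omega)).symm
        · rw [h1] at hx; rw [h2] at hy
          have e1 := mk_inr_eq hx
          have e2 := mk_inr_eq hy
          right; rw [← e1, ← e2]
          exact (lst_addone hk _ (by show k ≤ k - 1 + 1; omega)).symm
  · rintro ⟨hne, hor⟩
    have hcne : (flowerSpokes k).connectedComponentMk (Sum.inl i) ≠
        (flowerSpokes k).connectedComponentMk (Sum.inl i') := by
      intro hcc
      exact hne (hinj hcc)
    rcases hor with h | h
    · refine ⟨hcne, Sum.inr (i, 0), Sum.inr (i + ⟨1 % k, Nat.mod_lt 1 hk0⟩, 0), ?_, ?_,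
        mk_inr k i 0, by rw [h]; exact mk_inr k _ 0⟩
      · rw [flowerGraph_eq hk0, SimpleGraph.fromEdgeSet_adj]
        refine ⟨Or.inl (Or.inl (Or.inr ⟨i, rfl⟩)), ?_⟩
        intro hh
        rw [Sum.inr.injEq, Prod.mk.injEq] at hh
        exact ne_addone hk i hh.1
      · intro hM
        rcases (spokes_adj k _ _).mp hM with ⟨i0, j0, hc, -⟩ | ⟨i0, j0, hc, -⟩ <;>
          simp at hc
    · refine ⟨hcne, Sum.inr (i, 0), Sum.inr (i', 0), ?_, ?_, mk_inr k i 0, mk_inr k i' 0⟩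
      · rw [flowerGraph_eq hk0, SimpleGraph.fromEdgeSet_adj]
        refine ⟨Or.inl (Or.inl (Or.inr ⟨i', ?_⟩)), ?_⟩
        · rw [h]; exact Sym2.eq_swap
        · intro hh
          rw [Sum.inr.injEq, Prod.mk.injEq] at hh
          exact hne hh.1
      · intro hM
        rcases (spokes_adj k _ _).mp hM with ⟨i0, j0, hc, -⟩ | ⟨i0, j0, hc, -⟩ <;>
          simp at hc

private lemma flower_planar {k : ℕ} (hk : 3 ≤ k) (hk0 : 0 < k) :
    IsPlanar (contractedSimple (flowerGraph k hk0) (flowerSpokes k)) := by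
  haveI : NeZero k := ⟨by omega⟩
  have hone : (⟨1 % k, Nat.mod_lt 1 hk0⟩ : Fin k) = 1 := by
    apply Fin.ext
    rw [Fin.val_one']
  have hbij := cmp_bij k
  let iso : cycG k ≃g contractedSimple (flowerGraph k hk0) (flowerSpokes k) :=
    { toEquiv := Equiv.ofBijective _ hbij
      map_rel_iff' := by
        intro i i'
        have h := contracted_adj hk hk0 i i'
        rw [hone] at h
        exact h }
  obtain ⟨h5, h33⟩ := cycG_planar k hk
  exact ⟨fun h => h5 (isMinorOf_of_iso iso.symm h),
    fun h => h33 (isMinorOf_of_iso iso.symm h)⟩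

end Aux

/-- For odd `k ≥ 3`, the spokes of the flower snark `J_k` form a perfect
pseudo-matching `M` all of whose components are claws `K_{1,3}` (one for each `i`, the map
`i ↦ component of v_i` being a bijection), the edges of `J_k \ E(M)` split into three classes
each of which projects, in `J_k / M`, onto a Hamiltonian cycle `v₁' v₂' … v_k' v₁'`;
in particular `J_k / M` is planar. -/
theorem flowerSnark_spokes_ppm_contraction (k : ℕ) (hk : 3 ≤ k) (hko : Odd k) :
    let J := flowerGraph k (by omega)
    let M := flowerSpokes k
    let cmp : Fin k → M.ConnectedComponent := fun i => M.connectedComponentMk (Sum.inl i)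
    IsPerfectPseudoMatching J M ∧
    (∀ c : M.ConnectedComponent, Nonempty ((M.induce c.supp) ≃g clawGraph)) ∧
    Function.Bijective cmp ∧
    (∃ S : Fin 3 → Set (Sym2 (Fin k ⊕ Fin k × Fin 3)),
      (∀ a b : Fin 3, a ≠ b → Disjoint (S a) (S b)) ∧
      (⋃ a, S a) = J.edgeSet \ M.edgeSet ∧
      (∀ a : Fin 3, ∃ g : Fin k → Sym2 (Fin k ⊕ Fin k × Fin 3),
        Function.Injective g ∧ S a = Set.range g ∧
        ∀ i : Fin k, ∃ x y : Fin k ⊕ Fin k × Fin 3, g i = s(x, y) ∧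
          M.connectedComponentMk x = cmp i ∧
          M.connectedComponentMk y = cmp (i + ⟨1 % k, Nat.mod_lt 1 (by omega)⟩))) ∧
    IsPlanar (contractedSimple J M) := by
  intro J M cmp
  have hk0 : 0 < k := by omega
  haveI : NeZero k := ⟨by omega⟩
  refine ⟨⟨spokes_le hk0, fun c => ?_⟩, fun c => ?_, cmp_bij k, ?_, flower_planar hk hk0⟩
  · obtain ⟨i, hi⟩ := (cmp_bij k).2 c
    subst hi
    exact Or.inr ⟨clawIso i⟩
  · obtain ⟨i, hi⟩ := (cmp_bij k).2 c
    subst hi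
    exact ⟨clawIso i⟩
  · refine ⟨fun a => Set.range (gfun k hk a), ?_, union_eq hk hk0, ?_⟩
    · intro a b hab
      rw [Set.disjoint_left]
      rintro e ⟨i, rfl⟩ ⟨i', hi'⟩
      exact hab ((gfun_eq_iff hk hi').1).symm
    · intro a
      refine ⟨gfun k hk a, ?_, rfl, fun i => gfun_ends hk a i⟩
      intro i i' h
      exact (gfun_eq_iff hk h).2
end

section
/- Let G be a cubic graph, M a perfect pseudo-matching in G, and suppose the multigraph G/M obtained by contracting the components of M admits a cycle decomposition S compatible with the transition system T_M induced by the cycles of G \ E(M). Then G has a cycle double cover containing all cycles of G \ E(M). -/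
open SimpleGraph Classical

section Aux

lemma claw_adj_iff (a b : Fin 4) : clawGraph.Adj a b ↔ ((a = 0 ∧ b ≠ 0) ∨ (b = 0 ∧ a ≠ 0)) := by
  simp only [clawGraph, fromEdgeSet_adj, Set.mem_insert_iff, Set.mem_singleton_iff, Sym2.eq,
    Sym2.rel_iff', Prod.mk.injEq, Prod.swap_prod_mk]
  fin_cases a <;> fin_cases b <;> simp_all

variable {V : Type*} {G M : SimpleGraph V}

lemma mem_supp_of_adj {c : M.ConnectedComponent} {u v : V} (hu : u ∈ c.supp)
    (h : M.Adj u v) : v ∈ c.supp := by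
  rw [ConnectedComponent.mem_supp_iff] at hu ⊢
  rw [← hu]
  exact (ConnectedComponent.connectedComponentMk_eq_of_adj h).symm

section iso
variable {k : ℕ} {H : SimpleGraph (Fin k)} {c : M.ConnectedComponent}
  (φ : (M.induce c.supp) ≃g H)

private def isoV (a : Fin k) : V := ((φ.symm a : ↥c.supp) : V)

lemma isoV_mem (a : Fin k) : isoV φ a ∈ c.supp := (φ.symm a).2

lemma isoV_inj {a b : Fin k} (h : a ≠ b) : isoV φ a ≠ isoV φ b := by
  intro he
  exact h (φ.symm.injective (Subtype.ext he))

lemma isoV_adj {a b : Fin k} : M.Adj (isoV φ a) (isoV φ b) ↔ H.Adj a b := by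
  rw [← φ.symm.map_adj_iff]
  simp [isoV]

lemma isoV_surj {x : V} (hx : x ∈ c.supp) : ∃ a, x = isoV φ a := by
  refine ⟨φ ⟨x, hx⟩, ?_⟩
  simp [isoV]

end iso

/-- Component classification from a perfect pseudo-matching. -/
lemma compClass (hM : IsPerfectPseudoMatching G M) (c : M.ConnectedComponent) :
    (∃ p q : V, p ≠ q ∧ c.supp = {p, q} ∧ M.neighborSet p = {q} ∧ M.neighborSet q = {p}) ∨
    (∃ z p q r : V, c.supp = {z, p, q, r} ∧ (z ≠ p ∧ z ≠ q ∧ z ≠ r ∧ p ≠ q ∧ p ≠ r ∧ q ≠ r) ∧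
      M.neighborSet z = {p, q, r} ∧
      M.neighborSet p = {z} ∧ M.neighborSet q = {z} ∧ M.neighborSet r = {z}) := by
  rcases hM.2 c with h | h
  · obtain ⟨φ⟩ := h
    left
    set p := isoV φ 0
    set q := isoV φ 1
    have hpq : p ≠ q := isoV_inj φ (by decide)
    have hsupp : c.supp = {p, q} := by
      ext x
      constructor
      · intro hx
        obtain ⟨a, rfl⟩ := isoV_surj φ hx
        have : a = 0 ∨ a = 1 := by omega
        rcases this with rfl | rfl
        · exact Or.inl rfl
        · exact Or.inr rfl
      · rintro (rfl | rfl)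
        · exact isoV_mem φ 0
        · exact isoV_mem φ 1
    have hadj : M.Adj p q := (isoV_adj φ).2 (by simp)
    refine ⟨p, q, hpq, hsupp, ?_, ?_⟩ <;> ext u <;>
      simp only [mem_neighborSet, Set.mem_singleton_iff] <;> constructor
    · intro h
      have hu : u ∈ c.supp := mem_supp_of_adj (isoV_mem φ 0) h
      rw [hsupp] at hu
      rcases hu with rfl | rfl
      · exact absurd rfl h.ne'
      · rfl
    · rintro rfl; exact hadj
    · intro h
      have hu : u ∈ c.supp := mem_supp_of_adj (isoV_mem φ 1) h
      rw [hsupp] at hu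
      rcases hu with rfl | rfl
      · rfl
      · exact absurd rfl h.ne'
    · rintro rfl; exact hadj.symm
  · obtain ⟨φ⟩ := h
    right
    set z := isoV φ 0
    set p := isoV φ 1
    set q := isoV φ 2
    set r := isoV φ 3
    have hzp : z ≠ p := isoV_inj φ (by decide)
    have hzq : z ≠ q := isoV_inj φ (by decide)
    have hzr : z ≠ r := isoV_inj φ (by decide)
    have hpq : p ≠ q := isoV_inj φ (by decide)
    have hpr : p ≠ r := isoV_inj φ (by decide)
    have hqr : q ≠ r := isoV_inj φ (by decide)
    have hsupp : c.supp = {z, p, q, r} := by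
      ext x
      constructor
      · intro hx
        obtain ⟨a, rfl⟩ := isoV_surj φ hx
        have : a = 0 ∨ a = 1 ∨ a = 2 ∨ a = 3 := by omega
        rcases this with rfl | rfl | rfl | rfl <;> simp [Set.mem_insert_iff, z, p, q, r]
      · rintro (rfl | rfl | rfl | rfl)
        exacts [isoV_mem φ 0, isoV_mem φ 1, isoV_mem φ 2, isoV_mem φ 3]
    have hadjzp : M.Adj z p := (isoV_adj φ).2 ((claw_adj_iff 0 1).2 (by simp))
    have hadjzq : M.Adj z q := (isoV_adj φ).2 ((claw_adj_iff 0 2).2 (by simp))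
    have hadjzr : M.Adj z r := (isoV_adj φ).2 ((claw_adj_iff 0 3).2 (by simp))
    have hnadj : ∀ a b : Fin 4, a ≠ 0 → b ≠ 0 → ¬ M.Adj (isoV φ a) (isoV φ b) := by
      intro a b ha hb hM'
      have := (isoV_adj φ).1 hM'
      rw [claw_adj_iff] at this
      tauto
    have hnbr1 : ∀ a : Fin 4, a ≠ 0 → M.neighborSet (isoV φ a) = {z} := by
      intro a ha
      ext u
      simp only [mem_neighborSet, Set.mem_singleton_iff]
      constructor
      · intro h
        have hu : u ∈ c.supp := mem_supp_of_adj (isoV_mem φ a) h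
        rw [hsupp] at hu
        rcases hu with rfl | rfl | rfl | rfl
        · rfl
        · exact absurd h (by
            have := hnadj a 1 ha (by decide); exact this)
        · exact absurd h (hnadj a 2 ha (by decide))
        · exact absurd h (hnadj a 3 ha (by decide))
      · rintro rfl
        rcases show a = 1 ∨ a = 2 ∨ a = 3 by omega with rfl | rfl | rfl
        exacts [hadjzp.symm, hadjzq.symm, hadjzr.symm]
    refine ⟨z, p, q, r, hsupp, ⟨hzp, hzq, hzr, hpq, hpr, hqr⟩, ?_, hnbr1 1 (by decide),
      hnbr1 2 (by decide), hnbr1 3 (by decide)⟩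
    ext u
    simp only [mem_neighborSet, Set.mem_insert_iff, Set.mem_singleton_iff]
    constructor
    · intro h
      have hu : u ∈ c.supp := mem_supp_of_adj (isoV_mem φ 0) h
      rw [hsupp] at hu
      rcases hu with rfl | rfl | rfl | rfl
      · exact absurd rfl h.ne'
      · exact Or.inl rfl
      · exact Or.inr (Or.inl rfl)
      · exact Or.inr (Or.inr rfl)
    · rintro (rfl | rfl | rfl)
      exacts [hadjzp, hadjzq, hadjzr]


section derived
variable [Fintype V]

lemma nbrM_card (hM : IsPerfectPseudoMatching G M) (v : V) : (M.neighborSet v).ncard = 1 ∨ (M.neighborSet v).ncard = 3 := by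
  have hv : v ∈ (M.connectedComponentMk v).supp := ConnectedComponent.connectedComponentMk_mem
  rcases compClass hM (M.connectedComponentMk v) with
    ⟨p, q, hpq, hsupp, hp, hq⟩ | ⟨z, p, q, r, hsupp, ⟨h1,h2,h3,h4,h5,h6⟩, hz, hp, hq, hr⟩
  · rw [hsupp] at hv
    rcases hv with rfl | rfl <;> simp [hp, hq]
  · rw [hsupp] at hv
    rcases hv with rfl | rfl | rfl | rfl
    · right
      rw [hz, Set.ncard_insert_of_notMem (by simp [h4, h5]) (Set.toFinite _),
        Set.ncard_pair h6]
    all_goals left ; simp [hp, hq, hr]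

lemma nonM_nbrSet (v : V) :
    (G \ M).neighborSet v = G.neighborSet v \ M.neighborSet v := by
  ext u; simp [mem_neighborSet]

lemma nbrM_subset (hM : IsPerfectPseudoMatching G M) (v : V) : M.neighborSet v ⊆ G.neighborSet v := fun u hu => hM.1 hu

lemma nonM_card (hG : IsCubic G) (hM : IsPerfectPseudoMatching G M) (v : V) :
    ((G \ M).neighborSet v).ncard = 0 ∨ ((G \ M).neighborSet v).ncard = 2 := by
  rw [nonM_nbrSet, Set.ncard_diff (nbrM_subset hM v) (Set.toFinite _), hG v]
  rcases nbrM_card hM v with h | h <;> rw [h] <;> simp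

lemma degM_one (hG : IsCubic G) (hM : IsPerfectPseudoMatching G M) {v u : V}
    (h : (G \ M).Adj v u) : ∃ m, M.neighborSet v = {m} := by
  rw [← Set.ncard_eq_one]
  rcases nbrM_card hM v with h1 | h1
  · exact h1
  · exfalso
    have heq : M.neighborSet v = G.neighborSet v :=
      Set.eq_of_subset_of_ncard_le (nbrM_subset hM v) (by rw [hG v, h1]) (Set.toFinite _)
    rw [sdiff_adj] at h
    exact h.2 (by rw [← mem_neighborSet, heq, mem_neighborSet]; exact h.1)

lemma nonM_two (hG : IsCubic G) (hM : IsPerfectPseudoMatching G M) {v u : V}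
    (h : (G \ M).Adj v u) : ((G \ M).neighborSet v).ncard = 2 := by
  rcases nonM_card hG hM v with h1 | h1
  · exfalso
    rw [Set.ncard_eq_zero (Set.toFinite _)] at h1
    exact absurd (Set.eq_empty_iff_forall_notMem.1 h1 u) (by simpa using h)
  · exact h1

end derived

section compCycleSec
variable [Fintype V]

/-- The connected component of `G \ M` through `a`, as a subgraph. -/
def compCycle (G M : SimpleGraph V) (a : V) : SimpleGraph V where
  Adj u v := (G \ M).Adj u v ∧ (G \ M).Reachable u a ∧ (G \ M).Reachable v a
  symm := by constructor; rintro u v ⟨h1, h2, h3⟩; exact ⟨h1.symm, h3, h2⟩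
  loopless := by constructor; rintro v ⟨h1, -⟩; exact (G \ M).loopless.irrefl v h1

lemma compCycle_reach_aux {a u v : V} (w : (G \ M).Walk u v)
    (hv : (G \ M).Reachable v a) : (compCycle G M a).Reachable u v := by
  induction w with
  | nil => exact Reachable.refl _
  | @cons x y z hadj p ih =>
    have hya : (G \ M).Reachable y a := (Reachable.trans ⟨p⟩ hv)
    have hxa : (G \ M).Reachable x a := (Reachable.trans hadj.reachable hya)
    exact Reachable.trans (SimpleGraph.Adj.reachable
      (show (compCycle G M a).Adj x y from ⟨hadj, hxa, hya⟩)) (ih hv)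

lemma compCycle_reach {a u : V} (h : (G \ M).Reachable u a) :
    (compCycle G M a).Reachable u a := by
  obtain ⟨w⟩ := h
  exact compCycle_reach_aux w (Reachable.refl _)



lemma compCycle_le (a : V) : compCycle G M a ≤ G \ M := fun _ _ h => h.1

lemma compCycle_support {a u : V} (h : u ∈ (compCycle G M a).support) :
    (G \ M).Reachable u a := by
  obtain ⟨w, hw⟩ := h
  exact hw.2.1

lemma compCycle_isComponentCycle (hG : IsCubic G) (hM : IsPerfectPseudoMatching G M)
    {a b : V} (hab : (G \ M).Adj a b) :
    IsComponentCycleOf (G \ M) (compCycle G M a) := by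
  constructor
  · refine ⟨compCycle_le a, ⟨s(a, b), ?_⟩, ?_, ?_⟩
    · exact (mem_edgeSet _).2 ⟨hab, Reachable.refl _, hab.symm.reachable⟩
    · intro v
      by_cases hr : (G \ M).Reachable v a
      · have : (compCycle G M a).neighborSet v = (G \ M).neighborSet v := by
          ext u
          simp only [mem_neighborSet]
          exact ⟨fun h => h.1, fun h => ⟨h, hr, (h.symm.reachable).trans hr⟩⟩
        rw [this]
        exact nonM_card hG hM v
      · left
        have : (compCycle G M a).neighborSet v = ∅ := by
          ext u
          simp only [mem_neighborSet, Set.mem_empty_iff_false, iff_false]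
          exact fun h => hr h.2.1
        simp [this]
    · intro u v hu hv
      exact (compCycle_reach (compCycle_support hu)).trans
        (compCycle_reach (compCycle_support hv)).symm
  · intro u w hu hadj
    have h1 : (G \ M).Reachable u a := compCycle_support hu
    exact ⟨hadj, h1, hadj.symm.reachable.trans h1⟩

lemma supp_closed {C : SimpleGraph V} (hC : IsComponentCycleOf (G \ M) C)
    {x y : V} (w : (G \ M).Walk x y) (hx : x ∈ C.support) : y ∈ C.support := by
  induction w with
  | nil => exact hx
  | @cons p q r hadj w ih =>
    exact ih ((SimpleGraph.mem_support C).2 ⟨p, (hC.2 p q hx hadj).symm⟩)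

lemma componentCycle_eq {C : SimpleGraph V} (hC : IsComponentCycleOf (G \ M) C)
    {a : V} (ha : a ∈ C.support) : C = compCycle G M a := by
  ext u v
  constructor
  · intro h
    refine ⟨hC.1.1 h, ?_, ?_⟩
    · exact (hC.1.2.2.2 u a ((SimpleGraph.mem_support C).2 ⟨v, h⟩) ha).mono hC.1.1
    · exact (hC.1.2.2.2 v a ((SimpleGraph.mem_support C).2 ⟨u, h.symm⟩) ha).mono hC.1.1
  · rintro ⟨h1, h2, h3⟩
    have hu : u ∈ C.support := by
      obtain ⟨w⟩ := h2
      exact supp_closed hC w.reverse ha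
    exact hC.2 u v hu h1

end compCycleSec




namespace LiftSec
variable {V : Type*} {G M : SimpleGraph V}

def cDelta (c : ContractedCycle G M) : Fin c.n := ⟨1 % c.n, Nat.mod_lt _ c.hn⟩
def cSucc (c : ContractedCycle G M) (i : Fin c.n) : Fin c.n := i + cDelta c
def cPred (c : ContractedCycle G M) (i : Fin c.n) : Fin c.n := i - cDelta c

lemma cSucc_cPred (c : ContractedCycle G M) (i : Fin c.n) : cSucc c (cPred c i) = i := by
  haveI : NeZero c.n := ⟨c.hn.ne'⟩
  exact sub_add_cancel i (cDelta c)

lemma cPred_cSucc (c : ContractedCycle G M) (i : Fin c.n) : cPred c (cSucc c i) = i := by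
  haveI : NeZero c.n := ⟨c.hn.ne'⟩
  exact add_sub_cancel_right i (cDelta c)

lemma cSucc_inj (c : ContractedCycle G M) {i j : Fin c.n} (h : cSucc c i = cSucc c j) :
    i = j := by
  haveI : NeZero c.n := ⟨c.hn.ne'⟩
  exact add_right_cancel h

noncomputable def cX (c : ContractedCycle G M) (i : Fin c.n) : V := (c.ends i).choose
noncomputable def cY (c : ContractedCycle G M) (i : Fin c.n) : V :=
  (c.ends i).choose_spec.choose

lemma cSpec (c : ContractedCycle G M) (i : Fin c.n) :
    c.edge i = s(cX c i, cY c i) ∧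
    M.connectedComponentMk (cX c i) = c.vtx i ∧
    M.connectedComponentMk (cY c i) = c.vtx (cSucc c i) :=
  (c.ends i).choose_spec.choose_spec

def Tset (c : ContractedCycle G M) : Set V := {x | ∃ i, x ∈ c.edge i}

lemma cX_mem_edge (c : ContractedCycle G M) (i : Fin c.n) : cX c i ∈ c.edge i := by
  rw [(cSpec c i).1]; exact Sym2.mem_mk_left _ _

lemma cY_mem_edge (c : ContractedCycle G M) (i : Fin c.n) : cY c i ∈ c.edge i := by
  rw [(cSpec c i).1]; exact Sym2.mem_mk_right _ _

lemma cX_mem_T (c : ContractedCycle G M) (i : Fin c.n) : cX c i ∈ Tset c :=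
  ⟨i, cX_mem_edge c i⟩

lemma cY_mem_T (c : ContractedCycle G M) (i : Fin c.n) : cY c i ∈ Tset c :=
  ⟨i, cY_mem_edge c i⟩

lemma cXY_adj (c : ContractedCycle G M) (i : Fin c.n) : (G \ M).Adj (cX c i) (cY c i) := by
  have h := c.mem i
  rw [(cSpec c i).1] at h
  rw [sdiff_adj]
  exact ⟨(mem_edgeSet G).1 h.1, fun hM' => h.2 ((mem_edgeSet M).2 hM')⟩

lemma cX_ne_cY (c : ContractedCycle G M) (i : Fin c.n) : cX c i ≠ cY c i :=
  (cXY_adj c i).ne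

lemma mem_T_iff {c : ContractedCycle G M} {x : V} :
    x ∈ Tset c ↔ ∃ i, x = cX c i ∨ x = cY c i := by
  constructor
  · rintro ⟨i, hx⟩
    rw [(cSpec c i).1, Sym2.mem_iff] at hx
    exact ⟨i, hx⟩
  · rintro ⟨i, rfl | rfl⟩
    exacts [⟨i, cX_mem_edge c i⟩, ⟨i, cY_mem_edge c i⟩]

section compat
variable {D : Set (ContractedCycle G M)} {c : ContractedCycle G M}

lemma edge_eq_of_shared (hD : IsCompatibleCycleDecomposition G M D) (hc : c ∈ D)
    {i j : Fin c.n} {x : V} (hxi : x ∈ c.edge i) (hxj : x ∈ c.edge j) : i = j := by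
  by_contra hne
  exact hD.2.2 c hc (c.edge i) ⟨i, rfl⟩ (c.edge j) ⟨j, rfl⟩
    (fun h => hne (c.edge_inj h)) ⟨x, hxi, hxj⟩

lemma cX_ne_cY' (hD : IsCompatibleCycleDecomposition G M D) (hc : c ∈ D)
    {i j : Fin c.n} : cX c i ≠ cY c j := by
  intro h
  have : i = j := edge_eq_of_shared hD hc (cX_mem_edge c i) (h ▸ cY_mem_edge c j)
  exact cX_ne_cY c i (this ▸ h)

lemma T_mk_cases (hD : IsCompatibleCycleDecomposition G M D) (hc : c ∈ D)
    {x : V} (hx : x ∈ Tset c) {j : Fin c.n} (hmk : M.connectedComponentMk x = c.vtx j) :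
    x = cX c j ∨ x = cY c (cPred c j) := by
  obtain ⟨i, rfl | rfl⟩ := mem_T_iff.1 hx
  · left
    have : c.vtx i = c.vtx j := by rw [← (cSpec c i).2.1, hmk]
    rw [c.vtx_inj this]
  · right
    have : c.vtx (cSucc c i) = c.vtx j := by rw [← (cSpec c i).2.2, hmk]
    have hij : cSucc c i = j := c.vtx_inj this
    rw [← hij, cPred_cSucc]

lemma T_mk_exists {x : V} (hx : x ∈ Tset c) :
    ∃ j, M.connectedComponentMk x = c.vtx j := by
  obtain ⟨i, rfl | rfl⟩ := mem_T_iff.1 hx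
  · exact ⟨i, (cSpec c i).2.1⟩
  · exact ⟨cSucc c i, (cSpec c i).2.2⟩

lemma pair_mk (c : ContractedCycle G M) (j : Fin c.n) :
    M.connectedComponentMk (cY c (cPred c j)) = c.vtx j := by
  rw [(cSpec c (cPred c j)).2.2, cSucc_cPred]

end compat

def liftG (c : ContractedCycle G M) : SimpleGraph V where
  Adj u v := s(u, v) ∈ c.edges ∨ (M.Adj u v ∧ (u ∈ Tset c ∨ v ∈ Tset c))
  symm := by
    constructor
    rintro u v (h | ⟨h1, h2⟩)
    · left; rwa [Sym2.eq_swap]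
    · right; exact ⟨h1.symm, h2.symm⟩
  loopless := by
    constructor
    rintro v (h | ⟨h1, -⟩)
    · obtain ⟨i, hi⟩ := h
      have := (c.mem i).1
      rw [hi, mem_edgeSet] at this
      exact G.loopless.irrefl v this
    · exact M.loopless.irrefl v h1

lemma liftG_le (hM : IsPerfectPseudoMatching G M) (c : ContractedCycle G M) :
    liftG c ≤ G := by
  rintro u v (h | ⟨h1, -⟩)
  · obtain ⟨i, hi⟩ := h
    have := (c.mem i).1
    rw [hi, mem_edgeSet] at this
    exact this
  · exact hM.1 h1

lemma liftG_edge_mem (c : ContractedCycle G M) (i : Fin c.n) :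
    c.edge i ∈ (liftG c).edgeSet := by
  rw [(cSpec c i).1, mem_edgeSet]
  left
  rw [← (cSpec c i).1]
  exact ⟨i, rfl⟩

lemma liftG_edgeSet (c : ContractedCycle G M) (ε : Sym2 V) :
    ε ∈ (liftG c).edgeSet ↔ ε ∈ c.edges ∨ (ε ∈ M.edgeSet ∧ ∃ x ∈ ε, x ∈ Tset c) := by
  induction ε using Sym2.ind with
  | _ u v =>
    rw [mem_edgeSet]
    show (s(u,v) ∈ c.edges ∨ _) ↔ _
    simp only [Sym2.mem_iff, mem_edgeSet]
    constructor
    · rintro (h | ⟨h1, h2⟩)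
      · exact Or.inl h
      · refine Or.inr ⟨h1, ?_⟩
        rcases h2 with h2 | h2
        · exact ⟨u, Or.inl rfl, h2⟩
        · exact ⟨v, Or.inr rfl, h2⟩
    · rintro (h | ⟨h1, x, hx, hT⟩)
      · exact Or.inl h
      · refine Or.inr ⟨h1, ?_⟩
        rcases hx with rfl | rfl
        · exact Or.inl hT
        · exact Or.inr hT

section structural
variable [Fintype V] {D : Set (ContractedCycle G M)} {c : ContractedCycle G M}

lemma T_degM (hG : IsCubic G) (hM : IsPerfectPseudoMatching G M) {x : V}
    (hx : x ∈ Tset c) : ∃ m, M.neighborSet x = {m} := by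
  obtain ⟨i, rfl | rfl⟩ := mem_T_iff.1 hx
  · exact degM_one hG hM (cXY_adj c i)
  · exact degM_one hG hM (cXY_adj c i).symm

omit [Fintype V] in
lemma two_mem {p q x m : V} (hx : x ∈ ({p, q} : Set V)) (hm : m ∈ ({p, q} : Set V))
    (hne : x ≠ m) : ({p, q} : Set V) = {x, m} := by
  simp only [Set.mem_insert_iff, Set.mem_singleton_iff] at hx hm
  rcases hx with rfl | rfl <;> rcases hm with rfl | rfl
  · exact absurd rfl hne
  · rfl
  · exact Set.pair_comm _ _
  · exact absurd rfl hne

omit [Fintype V] in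
lemma singl_ne {p q r m : V} (h : ({p, q, r} : Set V) = {m}) (hpq : p ≠ q) : False := by
  have hp : p = m := by rw [← Set.mem_singleton_iff, ← h]; simp
  have hq : q = m := by rw [← Set.mem_singleton_iff, ← h]; simp
  exact hpq (hp.trans hq.symm)

lemma comp_pair (hM : IsPerfectPseudoMatching G M) {x m : V} (hadj : M.Adj x m)
    (hx1 : M.neighborSet x = {m}) (hm1 : M.neighborSet m = {x}) :
    (M.connectedComponentMk x).supp = {x, m} := by
  have hxs : x ∈ (M.connectedComponentMk x).supp := ConnectedComponent.connectedComponentMk_mem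
  rcases compClass hM (M.connectedComponentMk x) with
    ⟨p, q, hpq, hsupp, hp, hq⟩ | ⟨z, p, q, r, hsupp, ⟨h1,h2,h3,h4,h5,h6⟩, hz, hp, hq, hr⟩
  · have hms : m ∈ (M.connectedComponentMk x).supp := mem_supp_of_adj hxs hadj
    rw [hsupp] at hxs hms ⊢
    exact two_mem hxs hms hadj.ne
  · exfalso
    rw [hsupp] at hxs
    simp only [Set.mem_insert_iff, Set.mem_singleton_iff] at hxs
    have key : ∀ w : V, w = p ∨ w = q ∨ w = r → M.neighborSet w = {z} →
        M.neighborSet w = {m} → z = m := by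
      intro w _ hw1 hw2
      rw [hw1] at hw2
      exact Set.singleton_eq_singleton_iff.1 hw2
    rcases hxs with hxz | hx'
    · rw [hxz] at hx1
      rw [hz] at hx1
      exact singl_ne hx1 h4
    · have hzm : z = m := by
        rcases hx' with hxp | hxq | hxr
        · exact key x (Or.inl hxp) (by rw [hxp]; exact hp) hx1
        · exact key x (Or.inr (Or.inl hxq)) (by rw [hxq]; exact hq) hx1
        · exact key x (Or.inr (Or.inr hxr)) (by rw [hxr]; exact hr) hx1
      rw [← hzm] at hm1
      rw [hz] at hm1
      exact singl_ne hm1 h4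

lemma not_T_false (hM : IsPerfectPseudoMatching G M)
    (hD : IsCompatibleCycleDecomposition G M D) (hc : c ∈ D) {x m : V}
    (hadj : M.Adj x m) (hx1 : M.neighborSet x = {m}) (hm1 : M.neighborSet m = {x})
    (hmT : m ∈ Tset c) (hxT : x ∉ Tset c) : False := by
  obtain ⟨j, hj⟩ := T_mk_exists hmT
  have hmkx : M.connectedComponentMk x = c.vtx j := by
    rw [ConnectedComponent.connectedComponentMk_eq_of_adj hadj, hj]
  have hsupp := comp_pair hM hadj hx1 hm1
  have hA : cX c j ∈ ({x, m} : Set V) := by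
    rw [← hsupp, ConnectedComponent.mem_supp_iff, (cSpec c j).2.1, ← hmkx]
  have hB : cY c (cPred c j) ∈ ({x, m} : Set V) := by
    rw [← hsupp, ConnectedComponent.mem_supp_iff, pair_mk c j, ← hmkx]
  have hAB : cX c j ≠ cY c (cPred c j) := cX_ne_cY' hD hc
  simp only [Set.mem_insert_iff, Set.mem_singleton_iff] at hA hB
  rcases hA with hA | hA <;> rcases hB with hB | hB
  · exact hxT (hA ▸ cX_mem_T c j)
  · exact hxT (hA ▸ cX_mem_T c j)
  · exact hxT (hB ▸ cY_mem_T c (cPred c j))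
  · exact hAB (hA.trans hB.symm)

lemma center_struct (hG : IsCubic G) (hM : IsPerfectPseudoMatching G M)
    (hD : IsCompatibleCycleDecomposition G M D) (hc : c ∈ D) {v u : V}
    (hv : v ∉ Tset c) (hu : u ∈ Tset c) (hadj : M.Adj v u) :
    ∃ j, M.connectedComponentMk v = c.vtx j ∧
      (liftG c).neighborSet v = {cX c j, cY c (cPred c j)} := by
  obtain ⟨mu, hmu0⟩ := T_degM hG hM hu
  have hmu : M.neighborSet u = {v} := by
    have hvm : v ∈ M.neighborSet u := hadj.symm
    rw [hmu0] at hvm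
    rw [hmu0, hvm]
  clear hmu0
  have hvs : v ∈ (M.connectedComponentMk v).supp := ConnectedComponent.connectedComponentMk_mem
  have hus : u ∈ (M.connectedComponentMk v).supp := mem_supp_of_adj hvs hadj
  rcases compClass hM (M.connectedComponentMk v) with
    ⟨p, q, hpq, hsupp, hp, hq⟩ | ⟨z, p, q, r, hsupp, ⟨h1,h2,h3,h4,h5,h6⟩, hz, hp, hq, hr⟩
  · exfalso
    rw [hsupp] at hvs hus
    simp only [Set.mem_insert_iff, Set.mem_singleton_iff] at hvs hus
    have hx1 : M.neighborSet v = {u} := by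
      rcases hvs with hvp | hvq <;> rcases hus with hup | huq
      · exact absurd (hvp.trans hup.symm) hadj.ne
      · rw [hvp, hp, ← huq]
      · rw [hvq, hq, ← hup]
      · exact absurd (hvq.trans huq.symm) hadj.ne
    exact not_T_false hM hD hc hadj hx1 hmu hu hv
  · rw [hsupp] at hus
    simp only [Set.mem_insert_iff, Set.mem_singleton_iff] at hus
    have hvz : v = z := by
      rcases hus with huz | hup | huq | hur
      · exfalso
        rw [huz, hz] at hmu
        exact singl_ne hmu h4
      · have : ({z} : Set V) = {v} := by rw [← hp, ← hup, hmu]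
        exact (Set.singleton_eq_singleton_iff.1 this).symm
      · have : ({z} : Set V) = {v} := by rw [← hq, ← huq, hmu]
        exact (Set.singleton_eq_singleton_iff.1 this).symm
      · have : ({z} : Set V) = {v} := by rw [← hr, ← hur, hmu]
        exact (Set.singleton_eq_singleton_iff.1 this).symm
    have hnbrv : M.neighborSet v = {p, q, r} := by rw [hvz, hz]
    obtain ⟨j, hj⟩ := T_mk_exists hu
    have hmkv : M.connectedComponentMk v = c.vtx j := by
      rw [ConnectedComponent.connectedComponentMk_eq_of_adj hadj, hj]
    refine ⟨j, hmkv, ?_⟩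
    have hmem : ∀ w : V, w ∈ Tset c → M.connectedComponentMk w = c.vtx j → M.Adj v w := by
      intro w hwT hwmk
      have hws : w ∈ (M.connectedComponentMk v).supp := by
        rw [ConnectedComponent.mem_supp_iff, hwmk, hmkv]
      rw [hsupp] at hws
      simp only [Set.mem_insert_iff, Set.mem_singleton_iff] at hws
      have hwz : w ≠ z := fun h => hv (by rw [hvz, ← h]; exact hwT)
      have : w ∈ M.neighborSet v := by
        rw [hnbrv]
        rcases hws with h | h | h | h
        · exact absurd h hwz
        all_goals simp [h]
      exact this
    ext w
    simp only [mem_neighborSet, Set.mem_insert_iff, Set.mem_singleton_iff]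
    constructor
    · rintro (h | ⟨hadj', h2⟩)
      · exfalso
        obtain ⟨i, hi⟩ := h
        exact hv ⟨i, by rw [hi]; exact Sym2.mem_mk_left _ _⟩
      · have hwT : w ∈ Tset c := by
          rcases h2 with h2 | h2
          · exact absurd h2 hv
          · exact h2
        have hwmk : M.connectedComponentMk w = c.vtx j := by
          rw [← ConnectedComponent.connectedComponentMk_eq_of_adj hadj', hmkv]
        exact T_mk_cases hD hc hwT hwmk
    · rintro (rfl | rfl)
      · exact Or.inr ⟨hmem _ (cX_mem_T c j) (cSpec c j).2.1, Or.inr (cX_mem_T c j)⟩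
      · exact Or.inr ⟨hmem _ (cY_mem_T c (cPred c j)) (pair_mk c j),
          Or.inr (cY_mem_T c (cPred c j))⟩

lemma lift_edge_adj (c : ContractedCycle G M) (i : Fin c.n) :
    (liftG c).Adj (cX c i) (cY c i) := Or.inl ⟨i, (cSpec c i).1⟩

lemma lift_nbr_T (hG : IsCubic G) (hM : IsPerfectPseudoMatching G M)
    (hD : IsCompatibleCycleDecomposition G M D) (hc : c ∈ D) {t : V} (ht : t ∈ Tset c) :
    ∃ a b : V, a ≠ b ∧ (liftG c).neighborSet t = {a, b} := by
  obtain ⟨m, hm⟩ := T_degM hG hM ht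
  have hMadj : M.Adj t m := by rw [← mem_neighborSet, hm]; rfl
  obtain ⟨i, hrep⟩ := mem_T_iff.1 ht
  have hedge_i : t ∈ c.edge i := by
    rcases hrep with h | h
    · exact h ▸ cX_mem_edge c i
    · exact h ▸ cY_mem_edge c i
  rcases hrep with h1 | h1
  · refine ⟨cY c i, m, ?_, ?_⟩
    · intro h
      have : M.Adj (cX c i) (cY c i) := by rw [h]; exact h1 ▸ hMadj
      exact ((sdiff_adj _ _ _ _).1 (cXY_adj c i)).2 this
    · ext w
      simp only [mem_neighborSet, Set.mem_insert_iff, Set.mem_singleton_iff]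
      constructor
      · rintro (⟨k, hk⟩ | ⟨hM', -⟩)
        · have htk : t ∈ c.edge k := by rw [hk]; exact Sym2.mem_mk_left _ _
          have hki : k = i := edge_eq_of_shared hD hc htk hedge_i
          rw [hki, (cSpec c i).1] at hk
          rw [Sym2.eq_iff] at hk
          rcases hk with ⟨-, hw⟩ | ⟨-, hYt⟩
          · exact Or.inl hw.symm
          · exact absurd (hYt.trans h1).symm (cX_ne_cY c i)
        · right
          have : w ∈ M.neighborSet t := hM'
          rw [hm] at this
          exact this
      · rintro (rfl | rfl)
        · exact Or.inl ⟨i, by rw [(cSpec c i).1, h1]⟩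
        · exact Or.inr ⟨hMadj, Or.inl ht⟩
  · refine ⟨cX c i, m, ?_, ?_⟩
    · intro h
      have : M.Adj (cX c i) (cY c i) := by rw [← h1]; exact (h ▸ hMadj).symm
      exact ((sdiff_adj _ _ _ _).1 (cXY_adj c i)).2 this
    · ext w
      simp only [mem_neighborSet, Set.mem_insert_iff, Set.mem_singleton_iff]
      constructor
      · rintro (⟨k, hk⟩ | ⟨hM', -⟩)
        · have htk : t ∈ c.edge k := by rw [hk]; exact Sym2.mem_mk_left _ _
          have hki : k = i := edge_eq_of_shared hD hc htk hedge_i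
          rw [hki, (cSpec c i).1] at hk
          rw [Sym2.eq_iff] at hk
          rcases hk with ⟨hXt, -⟩ | ⟨hXw, -⟩
          · exact absurd (hXt.trans h1) (cX_ne_cY c i)
          · exact Or.inl hXw.symm
        · right
          have : w ∈ M.neighborSet t := hM'
          rw [hm] at this
          exact this
      · rintro (rfl | rfl)
        · exact Or.inl ⟨i, by rw [(cSpec c i).1, h1, Sym2.eq_swap]⟩
        · exact Or.inr ⟨hMadj, Or.inl ht⟩

lemma lift_deg (hG : IsCubic G) (hM : IsPerfectPseudoMatching G M)
    (hD : IsCompatibleCycleDecomposition G M D) (hc : c ∈ D) (v : V) :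
    ((liftG c).neighborSet v).ncard = 0 ∨ ((liftG c).neighborSet v).ncard = 2 := by
  by_cases hvT : v ∈ Tset c
  · obtain ⟨a, b, hab, hset⟩ := lift_nbr_T hG hM hD hc hvT
    right; rw [hset]; exact Set.ncard_pair hab
  · by_cases hex : ∃ u, M.Adj v u ∧ u ∈ Tset c
    · obtain ⟨u, h1, h2⟩ := hex
      obtain ⟨j, -, hset⟩ := center_struct hG hM hD hc hvT h2 h1
      right; rw [hset]; exact Set.ncard_pair (cX_ne_cY' hD hc)
    · left
      have : (liftG c).neighborSet v = ∅ := by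
        ext w
        simp only [mem_neighborSet, Set.mem_empty_iff_false, iff_false]
        rintro (⟨k, hk⟩ | ⟨h1, h2⟩)
        · exact hvT ⟨k, by rw [hk]; exact Sym2.mem_mk_left _ _⟩
        · rcases h2 with h2 | h2
          · exact hvT h2
          · exact hex ⟨w, h1, h2⟩
      rw [this]; simp

lemma reach_inner (hG : IsCubic G) (hM : IsPerfectPseudoMatching G M)
    (hD : IsCompatibleCycleDecomposition G M D) (hc : c ∈ D) (j : Fin c.n) :
    (liftG c).Reachable (cY c (cPred c j)) (cX c j) := by
  set A := cY c (cPred c j) with hA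
  set B := cX c j with hB
  by_cases hAB : A = B
  · rw [hAB]
  have hAT : A ∈ Tset c := cY_mem_T c (cPred c j)
  have hBT : B ∈ Tset c := cX_mem_T c j
  have hmkA : M.connectedComponentMk A = c.vtx j := pair_mk c j
  have hmkB : M.connectedComponentMk B = c.vtx j := (cSpec c j).2.1
  by_cases hadj : M.Adj A B
  · exact (Adj.reachable (Or.inr ⟨hadj, Or.inl hAT⟩))
  · have hAs : A ∈ (M.connectedComponentMk A).supp := ConnectedComponent.connectedComponentMk_mem
    have hBs : B ∈ (M.connectedComponentMk A).supp := by
      rw [ConnectedComponent.mem_supp_iff, hmkB, hmkA]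
    rcases compClass hM (M.connectedComponentMk A) with
      ⟨p, q, hpq, hsupp, hp, hq⟩ | ⟨z, p, q, r, hsupp, ⟨e1,e2,e3,e4,e5,e6⟩, hz, hp, hq, hr⟩
    · exfalso
      rw [hsupp] at hAs hBs
      simp only [Set.mem_insert_iff, Set.mem_singleton_iff] at hAs hBs
      rcases hAs with hA1 | hA1 <;> rcases hBs with hB1 | hB1
      · exact hAB (hA1.trans hB1.symm)
      · apply hadj
        rw [hA1, hB1, ← mem_neighborSet, hp]; rfl
      · apply hadj
        rw [hA1, hB1, ← mem_neighborSet, hq]; rfl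
      · exact hAB (hA1.trans hB1.symm)
    · rw [hsupp] at hAs hBs
      simp only [Set.mem_insert_iff, Set.mem_singleton_iff] at hAs hBs
      have hAz : A ≠ z := by
        intro h
        obtain ⟨mA, hmA⟩ := T_degM hG hM hAT
        rw [h, hz] at hmA
        exact singl_ne hmA e4
      have hBz : B ≠ z := by
        intro h
        obtain ⟨mB, hmB⟩ := T_degM hG hM hBT
        rw [h, hz] at hmB
        exact singl_ne hmB e4
      have hAadj : M.Adj A z := by
        rcases hAs with h | h | h | h
        · exact absurd h hAz
        all_goals rw [← mem_neighborSet, h]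
        · rw [hp]; rfl
        · rw [hq]; rfl
        · rw [hr]; rfl
      have hBadj : M.Adj B z := by
        rcases hBs with h | h | h | h
        · exact absurd h hBz
        all_goals rw [← mem_neighborSet, h]
        · rw [hp]; rfl
        · rw [hq]; rfl
        · rw [hr]; rfl
      exact (Adj.reachable (Or.inr ⟨hAadj, Or.inl hAT⟩)).trans
        (Adj.reachable (Or.inr ⟨hBadj.symm, Or.inr hBT⟩))

lemma reach_step (hG : IsCubic G) (hM : IsPerfectPseudoMatching G M)
    (hD : IsCompatibleCycleDecomposition G M D) (hc : c ∈ D) (j : Fin c.n) :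
    (liftG c).Reachable (cX c j) (cX c (cSucc c j)) := by
  refine (Adj.reachable (lift_edge_adj c j)).trans ?_
  have h : cY c j = cY c (cPred c (cSucc c j)) := by rw [cPred_cSucc]
  rw [h]
  exact reach_inner hG hM hD hc (cSucc c j)

lemma reach_base (hG : IsCubic G) (hM : IsPerfectPseudoMatching G M)
    (hD : IsCompatibleCycleDecomposition G M D) (hc : c ∈ D) (j : Fin c.n) :
    (liftG c).Reachable (cX c ⟨0, c.hn⟩) (cX c j) := by
  obtain ⟨k, hk⟩ := j
  induction k with
  | zero => exact Reachable.refl _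
  | succ k ih =>
    have hk' : k < c.n := Nat.lt_of_succ_lt hk
    have hn2 : 1 < c.n := lt_of_le_of_lt (by omega) hk
    have hsucc : cSucc c ⟨k, hk'⟩ = ⟨k + 1, hk⟩ := by
      apply Fin.ext
      show ((⟨k, hk'⟩ + ⟨1 % c.n, _⟩ : Fin c.n)).val = k + 1
      rw [Fin.val_add]
      simp only []
      rw [Nat.mod_eq_of_lt hn2, Nat.mod_eq_of_lt hk]
    exact (ih hk').trans (hsucc ▸ reach_step hG hM hD hc ⟨k, hk'⟩)

lemma lift_support_reach (hG : IsCubic G) (hM : IsPerfectPseudoMatching G M)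
    (hD : IsCompatibleCycleDecomposition G M D) (hc : c ∈ D) {v : V}
    (hv : v ∈ (liftG c).support) :
    (liftG c).Reachable v (cX c ⟨0, c.hn⟩) := by
  obtain ⟨w, hw⟩ := (SimpleGraph.mem_support _).1 hv
  by_cases hvT : v ∈ Tset c
  · obtain ⟨i, h | h⟩ := mem_T_iff.1 hvT
    · rw [h]
      exact (reach_base hG hM hD hc i).symm
    · rw [h, show cY c i = cY c (cPred c (cSucc c i)) by rw [cPred_cSucc]]
      exact (reach_inner hG hM hD hc (cSucc c i)).trans
        (reach_base hG hM hD hc (cSucc c i)).symm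
  · rcases hw with ⟨k, hk⟩ | ⟨h1, h2⟩
    · exact absurd ⟨k, by rw [hk]; exact Sym2.mem_mk_left _ _⟩ hvT
    · have h2' : w ∈ Tset c := by
        rcases h2 with h2 | h2
        · exact absurd h2 hvT
        · exact h2
      obtain ⟨j, -, hset⟩ := center_struct hG hM hD hc hvT h2' h1
      have : (liftG c).Adj v (cX c j) := by
        have : cX c j ∈ (liftG c).neighborSet v := by rw [hset]; exact Or.inl rfl
        exact this
      exact (Adj.reachable this).trans (reach_base hG hM hD hc j).symm

lemma lift_isCycle (hG : IsCubic G) (hM : IsPerfectPseudoMatching G M)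
    (hD : IsCompatibleCycleDecomposition G M D) (hc : c ∈ D) :
    IsCycleSubgraph G (liftG c) := by
  refine ⟨liftG_le hM c, ⟨c.edge ⟨0, c.hn⟩, liftG_edge_mem c _⟩, lift_deg hG hM hD hc, ?_⟩
  intro u v hu hv
  exact (lift_support_reach hG hM hD hc hu).trans (lift_support_reach hG hM hD hc hv).symm

lemma x_T_of_m_T (hG : IsCubic G) (hM : IsPerfectPseudoMatching G M)
    (hD : IsCompatibleCycleDecomposition G M D) (hc : c ∈ D) {x m : V}
    (hadj : M.Adj x m) (hx1 : M.neighborSet x = {m}) (hmT : m ∈ Tset c) : x ∈ Tset c := by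
  by_contra hxT
  obtain ⟨y, hy⟩ := T_degM hG hM hmT
  have hyx : M.neighborSet m = {x} := by
    have hxm : x ∈ M.neighborSet m := hadj.symm
    rw [hy] at hxm
    rw [hy, hxm]
  exact not_T_false hM hD hc hadj hx1 hyx hmT hxT

lemma T_edge_in (hD : IsCompatibleCycleDecomposition G M D) (hc : c ∈ D) {x : V}
    (hxT : x ∈ Tset c) : ∃ o, s(x, o) ∈ c.edges ∧ (G \ M).Adj x o := by
  obtain ⟨i, h | h⟩ := mem_T_iff.1 hxT
  · exact ⟨cY c i, ⟨i, by rw [(cSpec c i).1, h]⟩, by rw [h]; exact cXY_adj c i⟩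
  · exact ⟨cX c i, ⟨i, by rw [(cSpec c i).1, h, Sym2.eq_swap]⟩,
      by rw [h]; exact (cXY_adj c i).symm⟩

omit [Fintype V] in
lemma unique_D (hD : IsCompatibleCycleDecomposition G M D) {c c' : ContractedCycle G M}
    (hc : c ∈ D) (hc' : c' ∈ D) {f : Sym2 V} (h : f ∈ c.edges) (h' : f ∈ c'.edges) :
    c = c' := by
  by_contra hne
  exact Set.disjoint_left.1 (hD.2.1 c hc c' hc' hne) h h'

lemma Medge_pick (hM : IsPerfectPseudoMatching G M) {ε : Sym2 V}
    (hMε : ε ∈ M.edgeSet) :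
    ∃ x m : V, ε = s(x, m) ∧ M.Adj x m ∧ M.neighborSet x = {m} := by
  induction ε using Sym2.ind with
  | _ a b =>
    have hab : M.Adj a b := (mem_edgeSet M).1 hMε
    have has : a ∈ (M.connectedComponentMk a).supp := ConnectedComponent.connectedComponentMk_mem
    have hbs : b ∈ (M.connectedComponentMk a).supp := mem_supp_of_adj has hab
    rcases compClass hM (M.connectedComponentMk a) with
      ⟨p, q, hpq, hsupp, hp, hq⟩ | ⟨z, p, q, r, hsupp, ⟨e1,e2,e3,e4,e5,e6⟩, hz, hp, hq, hr⟩
    · rw [hsupp] at has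
      simp only [Set.mem_insert_iff, Set.mem_singleton_iff] at has
      refine ⟨a, b, rfl, hab, ?_⟩
      have hb : b ∈ M.neighborSet a := hab
      rcases has with h | h
      · rw [h, hp] at hb ⊢
        rw [← hb]
      · rw [h, hq] at hb ⊢
        rw [← hb]
    · rw [hsupp] at has hbs
      simp only [Set.mem_insert_iff, Set.mem_singleton_iff] at has hbs
      rcases has with haz | ha'
      · -- a is the centre, use b as the degree-one endpoint
        have hbz : b ≠ z := fun h => hab.ne (haz.trans h.symm)
        have hb1 : M.neighborSet b = {a} := by
          have ha : a ∈ M.neighborSet b := hab.symm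
          rcases hbs with h | h | h | h
          · exact absurd h hbz
          all_goals rw [h] at ha ⊢
          · rw [hp] at ha ⊢; rw [← ha]
          · rw [hq] at ha ⊢; rw [← ha]
          · rw [hr] at ha ⊢; rw [← ha]
        exact ⟨b, a, Sym2.eq_swap.symm, hab.symm, hb1⟩
      · refine ⟨a, b, rfl, hab, ?_⟩
        have hb : b ∈ M.neighborSet a := hab
        rcases ha' with h | h | h
        · rw [h, hp] at hb ⊢; rw [← hb]
        · rw [h, hq] at hb ⊢; rw [← hb]
        · rw [h, hr] at hb ⊢; rw [← hb]

lemma nonM_pair (hG : IsCubic G) (hM : IsPerfectPseudoMatching G M) {x m : V}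
    (hx1 : M.neighborSet x = {m}) :
    ∃ p q : V, p ≠ q ∧ (G \ M).neighborSet x = {p, q} := by
  have h2 : ((G \ M).neighborSet x).ncard = 2 := by
    rw [nonM_nbrSet, Set.ncard_diff (nbrM_subset hM x) (Set.toFinite _), hG x, hx1,
      Set.ncard_singleton]
  exact Set.ncard_eq_two.1 h2

lemma Mcount (hG : IsCubic G) (hM : IsPerfectPseudoMatching G M)
    (hD : IsCompatibleCycleDecomposition G M D) {ε : Sym2 V} (hMε : ε ∈ M.edgeSet) :
    ∃ c1, c1 ∈ D ∧ ∃ c2, c2 ∈ D ∧ c1 ≠ c2 ∧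
      ∀ c, c ∈ D → (ε ∈ (liftG c).edgeSet ↔ c = c1 ∨ c = c2) := by
  obtain ⟨x, m, hεeq, hadj, hx1⟩ := Medge_pick hM hMε
  obtain ⟨p, q, hpq, hpqs⟩ := nonM_pair hG hM hx1
  have hxp : (G \ M).Adj x p := by
    rw [← mem_neighborSet, hpqs]; exact Or.inl rfl
  have hxq : (G \ M).Adj x q := by
    rw [← mem_neighborSet, hpqs]; exact Or.inr rfl
  have hf1 : s(x, p) ∈ G.edgeSet \ M.edgeSet := by
    rw [← edgeSet_sdiff]; exact (mem_edgeSet _).2 hxp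
  have hf2 : s(x, q) ∈ G.edgeSet \ M.edgeSet := by
    rw [← edgeSet_sdiff]; exact (mem_edgeSet _).2 hxq
  obtain ⟨c1, hc1, hf1c⟩ := hD.1 _ hf1
  obtain ⟨c2, hc2, hf2c⟩ := hD.1 _ hf2
  have hne : c1 ≠ c2 := by
    rintro rfl
    exact hD.2.2 c1 hc1 _ hf1c _ hf2c (fun h => hpq (Sym2.congr_right.1 h))
      ⟨x, Sym2.mem_mk_left _ _, Sym2.mem_mk_left _ _⟩
  refine ⟨c1, hc1, c2, hc2, hne, fun c hcD => ?_⟩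
  rw [liftG_edgeSet]
  constructor
  · rintro (h | ⟨-, v, hv, hvT⟩)
    · exfalso
      obtain ⟨i, hi⟩ := h
      exact (c.mem i).2 (by rw [hi]; exact hMε)
    · have hxT : x ∈ Tset c := by
        rw [hεeq, Sym2.mem_iff] at hv
        rcases hv with rfl | rfl
        · exact hvT
        · exact x_T_of_m_T hG hM hD hcD hadj hx1 hvT
      obtain ⟨o, hoe, hoadj⟩ := T_edge_in hD hcD hxT
      have ho : o ∈ (G \ M).neighborSet x := hoadj
      rw [hpqs] at ho
      rcases ho with rfl | rfl
      · exact Or.inl (unique_D hD hcD hc1 hoe hf1c)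
      · exact Or.inr (unique_D hD hcD hc2 hoe hf2c)
  · have hxTmem : ∀ c' : ContractedCycle G M, s(x, p) ∈ c'.edges ∨ s(x, q) ∈ c'.edges →
        ε ∈ M.edgeSet ∧ ∃ v ∈ ε, v ∈ Tset c' := by
      intro c' hmem
      refine ⟨hMε, x, by rw [hεeq]; exact Sym2.mem_mk_left _ _, ?_⟩
      rcases hmem with ⟨i, hi⟩ | ⟨i, hi⟩ <;>
        exact ⟨i, by rw [hi]; exact Sym2.mem_mk_left _ _⟩
    rintro (rfl | rfl)
    · exact Or.inr (hxTmem c (Or.inl hf1c))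
    · exact Or.inr (hxTmem c (Or.inr hf2c))

lemma nonMcount (hG : IsCubic G) (hM : IsPerfectPseudoMatching G M)
    (hD : IsCompatibleCycleDecomposition G M D) {ε : Sym2 V}
    (hε : ε ∈ G.edgeSet \ M.edgeSet) :
    ∃ Ca : SimpleGraph V, IsComponentCycleOf (G \ M) Ca ∧ ε ∈ Ca.edgeSet ∧
      (∀ C, IsComponentCycleOf (G \ M) C → ε ∈ C.edgeSet → C = Ca) ∧
      ∃ c0, c0 ∈ D ∧ ∀ c', c' ∈ D → (ε ∈ (liftG c').edgeSet ↔ c' = c0) := by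
  induction ε using Sym2.ind with
  | _ a b =>
    have hab : (G \ M).Adj a b := by
      rw [← mem_edgeSet, edgeSet_sdiff]; exact hε
    refine ⟨compCycle G M a, compCycle_isComponentCycle hG hM hab, ?_, ?_, ?_⟩
    · exact (mem_edgeSet _).2 ⟨hab, Reachable.refl _, hab.symm.reachable⟩
    · intro C hC hεC
      have haC : a ∈ C.support := (SimpleGraph.mem_support C).2 ⟨b, (mem_edgeSet C).1 hεC⟩
      exact componentCycle_eq hC haC
    · obtain ⟨c0, hc0, hεc0⟩ := hD.1 _ hε
      refine ⟨c0, hc0, fun c' hc' => ?_⟩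
      rw [liftG_edgeSet]
      constructor
      · rintro (h | ⟨hM', -⟩)
        · exact unique_D hD hc' hc0 h hεc0
        · exact absurd hM' hε.2
      · rintro rfl
        exact Or.inl hεc0

end structural
end LiftSec


open LiftSec in
theorem main_thm {V : Type*} [Fintype V] (G M : SimpleGraph V)
    (hG : IsCubic G) (hM : IsPerfectPseudoMatching G M)
    (D : Set (ContractedCycle G M)) (hD : IsCompatibleCycleDecomposition G M D) :
    ∃ (n : ℕ) (F : Fin n → SimpleGraph V),
      ((∀ i, IsCycleSubgraph G (F i)) ∧
        ∀ e ∈ G.edgeSet, {i : Fin n | e ∈ (F i).edgeSet}.ncard = 2) ∧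
      ∀ C : SimpleGraph V, IsComponentCycleOf (G \ M) C → ∃ i, F i = C := by
  classical
  have hDfin : D.Finite := by
    apply Set.Finite.of_finite_image (Set.toFinite (ContractedCycle.edges '' D))
    intro c hc c' hc' h
    by_contra hne
    have hdisj := hD.2.1 c hc c' hc' hne
    rw [h] at hdisj
    have he : c'.edges = ∅ := disjoint_self.1 hdisj
    have hmem : c'.edge ⟨0, c'.hn⟩ ∈ c'.edges := ⟨⟨0, c'.hn⟩, rfl⟩
    rw [he] at hmem
    exact hmem
  haveI := hDfin.to_subtype
  obtain ⟨n, ⟨e⟩⟩ := Finite.exists_equiv_fin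
    (↥{C : SimpleGraph V | IsComponentCycleOf (G \ M) C} ⊕ ↥D)
  set g : ↥{C : SimpleGraph V | IsComponentCycleOf (G \ M) C} ⊕ ↥D → SimpleGraph V :=
    Sum.elim (fun C => C.1) (fun c => liftG c.1) with hg
  refine ⟨n, fun i => g (e.symm i), ⟨?_, ?_⟩, ?_⟩
  · intro i
    show IsCycleSubgraph G (g (e.symm i))
    rcases hx : e.symm i with ⟨C, hC⟩ | ⟨c, hc⟩
    · exact ⟨hC.1.1.trans sdiff_le, hC.1.2.1, hC.1.2.2.1, hC.1.2.2.2⟩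
    · exact lift_isCycle hG hM hD hc
  · intro ε hε
    have hSeq : {i : Fin n | ε ∈ (g (e.symm i)).edgeSet} = e '' {x | ε ∈ (g x).edgeSet} := by
      rw [Equiv.image_eq_preimage_symm]
      rfl
    rw [hSeq, Set.ncard_image_of_injective _ e.injective]
    by_cases hMε : ε ∈ M.edgeSet
    · obtain ⟨c1, hc1, c2, hc2, hne, hiff⟩ := Mcount hG hM hD hMε
      have hset : {x : ↥{C : SimpleGraph V | IsComponentCycleOf (G \ M) C} ⊕ ↥D |
          ε ∈ (g x).edgeSet} = {Sum.inr ⟨c1, hc1⟩, Sum.inr ⟨c2, hc2⟩} := by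
        ext x
        rcases x with ⟨C, hC⟩ | ⟨c, hc⟩
        · simp only [Set.mem_setOf_eq, Set.mem_insert_iff, Set.mem_singleton_iff, hg,
            Sum.elim_inl]
          constructor
          · intro h
            exfalso
            have hsub : C.edgeSet ⊆ (G \ M).edgeSet := edgeSet_mono hC.1.1
            have h2 := hsub h
            rw [edgeSet_sdiff] at h2
            exact h2.2 hMε
          · rintro (h | h) <;> exact absurd h (by simp)
        · simp only [Set.mem_setOf_eq, Set.mem_insert_iff, Set.mem_singleton_iff, hg,
            Sum.elim_inr]
          rw [hiff c hc]
          constructor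
          · rintro (rfl | rfl)
            · exact Or.inl rfl
            · exact Or.inr rfl
          · rintro (h | h)
            · exact Or.inl (congrArg Subtype.val (Sum.inr_injective h))
            · exact Or.inr (congrArg Subtype.val (Sum.inr_injective h))
      rw [hset]
      refine Set.ncard_pair ?_
      intro h
      exact hne (congrArg Subtype.val (Sum.inr_injective h))
    · obtain ⟨Ca, hCa, hεCa, huniq, c0, hc0, hiff⟩ := nonMcount hG hM hD ⟨hε, hMε⟩
      have hset : {x : ↥{C : SimpleGraph V | IsComponentCycleOf (G \ M) C} ⊕ ↥D |
          ε ∈ (g x).edgeSet} = {Sum.inl ⟨Ca, hCa⟩, Sum.inr ⟨c0, hc0⟩} := by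
        ext x
        rcases x with ⟨C, hC⟩ | ⟨c, hc⟩
        · simp only [Set.mem_setOf_eq, Set.mem_insert_iff, Set.mem_singleton_iff, hg,
            Sum.elim_inl]
          constructor
          · intro h
            exact Or.inl (congrArg Sum.inl (Subtype.ext (huniq C hC h)))
          · rintro (h | h)
            · have hCCa : C = Ca := congrArg Subtype.val (Sum.inl_injective h)
              rw [hCCa]
              exact hεCa
            · exact absurd h (by simp)
        · simp only [Set.mem_setOf_eq, Set.mem_insert_iff, Set.mem_singleton_iff, hg,
            Sum.elim_inr]
          rw [hiff c hc]
          constructor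
          · rintro rfl
            exact Or.inr rfl
          · rintro (h | h)
            · exact absurd h (by simp)
            · exact congrArg Subtype.val (Sum.inr_injective h)
      rw [hset]
      refine Set.ncard_pair (by simp)
  · intro C hC
    refine ⟨e (Sum.inl ⟨C, hC⟩), ?_⟩
    show g (e.symm (e (Sum.inl ⟨C, hC⟩))) = C
    rw [Equiv.symm_apply_apply]
    rfl

end Aux

/-- If for a cubic graph `G` with perfect pseudo-matching `M` the contracted
multigraph `G/M` has a cycle decomposition compatible with the transition system `T_M` induced
by the cycles of `G \ E(M)`, then `G` has a cycle double cover containing all cycles of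
`G \ E(M)`. -/
theorem cdc_of_compatible_cycle_decomposition
    {V : Type*} [Fintype V] (G M : SimpleGraph V)
    (hG : IsCubic G) (hM : IsPerfectPseudoMatching G M)
    (D : Set (ContractedCycle G M)) (hD : IsCompatibleCycleDecomposition G M D) :
    ∃ (n : ℕ) (F : Fin n → SimpleGraph V), IsCycleDoubleCover G F ∧
      ∀ C : SimpleGraph V, IsComponentCycleOf (G \ M) C → ∃ i, F i = C := by
  obtain ⟨n, F, h1, h2⟩ := main_thm G M hG hM D hD
  exact ⟨n, F, h1, h2⟩
end

section
/- The first Blanuša block B_0 (an 8-vertex cubic graph fragment with four half-edges a, b, b', a') has exactly two types of proper 3-edge-colorings: either all four half-edges a, a', b, b' receive the same color, or a and a' receive one common color while b and b' receive a second common color different from that of a and a'. -/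
open SimpleGraph Classical

/-- The first Blanuša block `B₀`, with vertices `u₀,…,u₇ = 0,…,7` and pendant vertices
`a = 8`, `b = 9`, `b' = 10`, `a' = 11` (the pendant edges model the four half-edges). -/
def blanusaB0 : SimpleGraph (Fin 12) :=
  SimpleGraph.fromEdgeSet
    {s((8 : Fin 12), 0), s((9 : Fin 12), 5), s((10 : Fin 12), 2), s((11 : Fin 12), 7),
     s((0 : Fin 12), 1), s((1 : Fin 12), 2), s((5 : Fin 12), 6), s((6 : Fin 12), 7),
     s((3 : Fin 12), 4), s((0 : Fin 12), 3), s((3 : Fin 12), 5), s((1 : Fin 12), 6),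
     s((2 : Fin 12), 4), s((4 : Fin 12), 7)}

/-- The graph `G*` obtained from `G` by deleting the crossing edges `x x'''` and `x' x''`
and inserting a Blanuša block `B₀` (on the new vertices `Sum.inr 0, …, Sum.inr 7`), joining
`x` to `u₀` (half-edge `a`), `x'''` to `u₇` (half-edge `a'`), `x'` to `u₂` (half-edge `b'`)
and `x''` to `u₅` (half-edge `b`). -/
def blanusaInsert {V : Type*} (G : SimpleGraph V) (x x' x'' x''' : V) :
    SimpleGraph (V ⊕ Fin 8) :=
  SimpleGraph.fromEdgeSet (
    (Sym2.map Sum.inl '' (G.edgeSet \ {s(x, x'''), s(x', x'')})) ∪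
    {s(Sum.inl x, Sum.inr 0), s(Sum.inl x''', Sum.inr 7),
     s(Sum.inl x', Sum.inr 2), s(Sum.inl x'', Sum.inr 5),
     s(Sum.inr (0 : Fin 8), Sum.inr 1), s(Sum.inr (1 : Fin 8), Sum.inr 2),
     s(Sum.inr (5 : Fin 8), Sum.inr 6), s(Sum.inr (6 : Fin 8), Sum.inr 7),
     s(Sum.inr (3 : Fin 8), Sum.inr 4), s(Sum.inr (0 : Fin 8), Sum.inr 3),
     s(Sum.inr (3 : Fin 8), Sum.inr 5), s(Sum.inr (1 : Fin 8), Sum.inr 6),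
     s(Sum.inr (2 : Fin 8), Sum.inr 4), s(Sum.inr (4 : Fin 8), Sum.inr 7)})


set_option maxHeartbeats 4000000 in
/-- Auxiliary arithmetic lemma for the colour chase in `B₀`. -/
theorem blanusaB0_aux (x0 x1 x2 x3 x4 x5 x6 x7 x8 x9 x10 x11 x12 x13 : ℕ)
 (b0 : x0 < 3)(b1 : x1 < 3)(b2 : x2 < 3)(b3 : x3 < 3)(b4 : x4 < 3)(b5 : x5 < 3)
 (b6 : x6 < 3)(b7 : x7 < 3)(b8 : x8 < 3)(b9 : x9 < 3)(b10 : x10 < 3)(b11 : x11 < 3)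
 (b12 : x12 < 3)(b13 : x13 < 3)
 (e1 : x0+x4+x9 = 3)(e2 : x4+x5+x11 = 3)(e3 : x2+x5+x12 = 3)(e4 : x8+x9+x10 = 3)
 (e5 : x8+x12+x13 = 3)(e6 : x1+x6+x10 = 3)(e7 : x6+x7+x11 = 3)(e8 : x3+x7+x13 = 3)
 (h1 : x0 ≠ x4)(h3 : x4 ≠ x9)
 (h4 : x4 ≠ x5)(h7 : x2 ≠ x5)(h10 : x8 ≠ x9)(h13 : x8 ≠ x12)
 (h16 : x1 ≠ x6)(h19 : x6 ≠ x7)(h22 : x3 ≠ x7) :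
 x0 = x3 ∧ x1 = x2 := by omega

/-- Three pairwise distinct elements of `Fin 3` have value-sum `3`. -/
theorem fin3_tri : ∀ x y z : Fin 3, x ≠ y → x ≠ z → y ≠ z →
    x.val + y.val + z.val = 3 := by decide

/-- A type-1 colouring of `B₀` (all four pendant edges coloured `0`). -/
def blanusaCol1 : Sym2 (Fin 12) → Fin 3 := fun e =>
  if e = s((8:Fin 12),0) then 0 else if e = s((9:Fin 12),5) then 0
  else if e = s((10:Fin 12),2) then 0 else if e = s((11:Fin 12),7) then 0
  else if e = s((0:Fin 12),1) then 1 else if e = s((1:Fin 12),2) then 2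
  else if e = s((5:Fin 12),6) then 2 else if e = s((6:Fin 12),7) then 1
  else if e = s((3:Fin 12),4) then 0 else if e = s((0:Fin 12),3) then 2
  else if e = s((3:Fin 12),5) then 1 else if e = s((1:Fin 12),6) then 0
  else if e = s((2:Fin 12),4) then 1 else if e = s((4:Fin 12),7) then 2 else 0

/-- A type-2 colouring of `B₀` (`a, a'` coloured `0`, `b, b'` coloured `1`). -/
def blanusaCol2 : Sym2 (Fin 12) → Fin 3 := fun e =>
  if e = s((8:Fin 12),0) then 0 else if e = s((9:Fin 12),5) then 1
  else if e = s((10:Fin 12),2) then 1 else if e = s((11:Fin 12),7) then 0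
  else if e = s((0:Fin 12),1) then 1 else if e = s((1:Fin 12),2) then 2
  else if e = s((5:Fin 12),6) then 2 else if e = s((6:Fin 12),7) then 1
  else if e = s((3:Fin 12),4) then 1 else if e = s((0:Fin 12),3) then 2
  else if e = s((3:Fin 12),5) then 0 else if e = s((1:Fin 12),6) then 0
  else if e = s((2:Fin 12),4) then 0 else if e = s((4:Fin 12),7) then 2 else 0

set_option maxHeartbeats 1000000 in
theorem blanusaCol1_proper : IsProper3EdgeColoring blanusaB0 blanusaCol1 := by
  intro e he f hf hne hsh
  simp only [blanusaB0, edgeSet_fromEdgeSet, Set.mem_diff, Set.mem_insert_iff,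
    Set.mem_singleton_iff] at he hf
  obtain ⟨he, -⟩ := he
  obtain ⟨hf, -⟩ := hf
  rcases he with rfl|rfl|rfl|rfl|rfl|rfl|rfl|rfl|rfl|rfl|rfl|rfl|rfl|rfl <;>
    rcases hf with rfl|rfl|rfl|rfl|rfl|rfl|rfl|rfl|rfl|rfl|rfl|rfl|rfl|rfl <;>
    revert hne hsh <;> decide

set_option maxHeartbeats 1000000 in
theorem blanusaCol2_proper : IsProper3EdgeColoring blanusaB0 blanusaCol2 := by
  intro e he f hf hne hsh
  simp only [blanusaB0, edgeSet_fromEdgeSet, Set.mem_diff, Set.mem_insert_iff,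
    Set.mem_singleton_iff] at he hf
  obtain ⟨he, -⟩ := he
  obtain ⟨hf, -⟩ := hf
  rcases he with rfl|rfl|rfl|rfl|rfl|rfl|rfl|rfl|rfl|rfl|rfl|rfl|rfl|rfl <;>
    rcases hf with rfl|rfl|rfl|rfl|rfl|rfl|rfl|rfl|rfl|rfl|rfl|rfl|rfl|rfl <;>
    revert hne hsh <;> decide

theorem blanusaB0_mem : ∀ e ∈ ({s((8 : Fin 12), 0), s((9 : Fin 12), 5), s((10 : Fin 12), 2),
    s((11 : Fin 12), 7), s((0 : Fin 12), 1), s((1 : Fin 12), 2), s((5 : Fin 12), 6),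
    s((6 : Fin 12), 7), s((3 : Fin 12), 4), s((0 : Fin 12), 3), s((3 : Fin 12), 5),
    s((1 : Fin 12), 6), s((2 : Fin 12), 4), s((4 : Fin 12), 7)} : Set (Sym2 (Fin 12))),
    e ∈ blanusaB0.edgeSet := by
  intro e he
  rw [blanusaB0, edgeSet_fromEdgeSet]
  refine ⟨he, ?_⟩
  rcases he with rfl|rfl|rfl|rfl|rfl|rfl|rfl|rfl|rfl|rfl|rfl|rfl|rfl|rfl <;> decide

/-- The Blanuša block `B₀` has exactly two types of proper
3-edge-colourings: either all four pendant (half-)edges `a, a', b, b'` get the same colour,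
or `a, a'` get one common colour and `b, b'` a different common colour; moreover both types
do occur. -/
theorem blanusaB0_coloring_types :
    (∀ c : Sym2 (Fin 12) → Fin 3, IsProper3EdgeColoring blanusaB0 c →
      (c s((8 : Fin 12), 0) = c s((11 : Fin 12), 7) ∧
       c s((9 : Fin 12), 5) = c s((10 : Fin 12), 2) ∧
       c s((8 : Fin 12), 0) = c s((9 : Fin 12), 5)) ∨
      (c s((8 : Fin 12), 0) = c s((11 : Fin 12), 7) ∧
       c s((9 : Fin 12), 5) = c s((10 : Fin 12), 2) ∧
       c s((8 : Fin 12), 0) ≠ c s((9 : Fin 12), 5))) ∧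
    (∃ c : Sym2 (Fin 12) → Fin 3, IsProper3EdgeColoring blanusaB0 c ∧
      c s((8 : Fin 12), 0) = c s((11 : Fin 12), 7) ∧
      c s((9 : Fin 12), 5) = c s((10 : Fin 12), 2) ∧
      c s((8 : Fin 12), 0) = c s((9 : Fin 12), 5)) ∧
    (∃ c : Sym2 (Fin 12) → Fin 3, IsProper3EdgeColoring blanusaB0 c ∧
      c s((8 : Fin 12), 0) = c s((11 : Fin 12), 7) ∧
      c s((9 : Fin 12), 5) = c s((10 : Fin 12), 2) ∧
      c s((8 : Fin 12), 0) ≠ c s((9 : Fin 12), 5)) := by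
  constructor
  · intro c hc
    -- memberships of the fourteen edges
    have m0 := blanusaB0_mem s((8 : Fin 12), 0) (by left; rfl)
    have m1 := blanusaB0_mem s((9 : Fin 12), 5) (by right; left; rfl)
    have m2 := blanusaB0_mem s((10 : Fin 12), 2) (by right; right; left; rfl)
    have m3 := blanusaB0_mem s((11 : Fin 12), 7) (by right; right; right; left; rfl)
    have m4 := blanusaB0_mem s((0 : Fin 12), 1)
      (by right; right; right; right; left; rfl)
    have m5 := blanusaB0_mem s((1 : Fin 12), 2)
      (by right; right; right; right; right; left; rfl)
    have m6 := blanusaB0_mem s((5 : Fin 12), 6)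
      (by right; right; right; right; right; right; left; rfl)
    have m7 := blanusaB0_mem s((6 : Fin 12), 7)
      (by right; right; right; right; right; right; right; left; rfl)
    have m8 := blanusaB0_mem s((3 : Fin 12), 4)
      (by right; right; right; right; right; right; right; right; left; rfl)
    have m9 := blanusaB0_mem s((0 : Fin 12), 3)
      (by right; right; right; right; right; right; right; right; right; left; rfl)
    have m10 := blanusaB0_mem s((3 : Fin 12), 5)
      (by right; right; right; right; right; right; right; right; right; right; left; rfl)
    have m11 := blanusaB0_mem s((1 : Fin 12), 6)
      (by right; right; right; right; right; right; right; right; right; right; right;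
          left; rfl)
    have m12 := blanusaB0_mem s((2 : Fin 12), 4)
      (by right; right; right; right; right; right; right; right; right; right; right;
          right; left; rfl)
    have m13 := blanusaB0_mem s((4 : Fin 12), 7)
      (by right; right; right; right; right; right; right; right; right; right; right;
          right; right; rfl)
    -- the disequalities at each vertex
    have d1 := hc _ m0 _ m4 (by decide) ⟨0, by decide, by decide⟩
    have d2 := hc _ m0 _ m9 (by decide) ⟨0, by decide, by decide⟩
    have d3 := hc _ m4 _ m9 (by decide) ⟨0, by decide, by decide⟩
    have d4 := hc _ m4 _ m5 (by decide) ⟨1, by decide, by decide⟩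
    have d5 := hc _ m4 _ m11 (by decide) ⟨1, by decide, by decide⟩
    have d6 := hc _ m5 _ m11 (by decide) ⟨1, by decide, by decide⟩
    have d7 := hc _ m2 _ m5 (by decide) ⟨2, by decide, by decide⟩
    have d8 := hc _ m2 _ m12 (by decide) ⟨2, by decide, by decide⟩
    have d9 := hc _ m5 _ m12 (by decide) ⟨2, by decide, by decide⟩
    have d10 := hc _ m8 _ m9 (by decide) ⟨3, by decide, by decide⟩
    have d11 := hc _ m8 _ m10 (by decide) ⟨3, by decide, by decide⟩
    have d12 := hc _ m9 _ m10 (by decide) ⟨3, by decide, by decide⟩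
    have d13 := hc _ m8 _ m12 (by decide) ⟨4, by decide, by decide⟩
    have d14 := hc _ m8 _ m13 (by decide) ⟨4, by decide, by decide⟩
    have d15 := hc _ m12 _ m13 (by decide) ⟨4, by decide, by decide⟩
    have d16 := hc _ m1 _ m6 (by decide) ⟨5, by decide, by decide⟩
    have d17 := hc _ m1 _ m10 (by decide) ⟨5, by decide, by decide⟩
    have d18 := hc _ m6 _ m10 (by decide) ⟨5, by decide, by decide⟩
    have d19 := hc _ m6 _ m7 (by decide) ⟨6, by decide, by decide⟩
    have d20 := hc _ m6 _ m11 (by decide) ⟨6, by decide, by decide⟩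
    have d21 := hc _ m7 _ m11 (by decide) ⟨6, by decide, by decide⟩
    have d22 := hc _ m3 _ m7 (by decide) ⟨7, by decide, by decide⟩
    have d23 := hc _ m3 _ m13 (by decide) ⟨7, by decide, by decide⟩
    have d24 := hc _ m7 _ m13 (by decide) ⟨7, by decide, by decide⟩
    -- vertex sum equations
    have e1 := fin3_tri _ _ _ d1 d2 d3
    have e2 := fin3_tri _ _ _ d4 d5 d6
    have e3 := fin3_tri _ _ _ d7 d8 d9
    have e4 := fin3_tri _ _ _ d10 d11 d12
    have e5 := fin3_tri _ _ _ d13 d14 d15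
    have e6 := fin3_tri _ _ _ d16 d17 d18
    have e7 := fin3_tri _ _ _ d19 d20 d21
    have e8 := fin3_tri _ _ _ d22 d23 d24
    have vne : ∀ x y : Fin 3, x ≠ y → x.val ≠ y.val := fun x y h hh => h (Fin.ext hh)
    have key := blanusaB0_aux (c s((8 : Fin 12), 0)).val (c s((9 : Fin 12), 5)).val
      (c s((10 : Fin 12), 2)).val (c s((11 : Fin 12), 7)).val (c s((0 : Fin 12), 1)).val
      (c s((1 : Fin 12), 2)).val (c s((5 : Fin 12), 6)).val (c s((6 : Fin 12), 7)).val
      (c s((3 : Fin 12), 4)).val (c s((0 : Fin 12), 3)).val (c s((3 : Fin 12), 5)).val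
      (c s((1 : Fin 12), 6)).val (c s((2 : Fin 12), 4)).val (c s((4 : Fin 12), 7)).val
      (Fin.is_lt _) (Fin.is_lt _) (Fin.is_lt _) (Fin.is_lt _) (Fin.is_lt _) (Fin.is_lt _)
      (Fin.is_lt _) (Fin.is_lt _) (Fin.is_lt _) (Fin.is_lt _) (Fin.is_lt _) (Fin.is_lt _)
      (Fin.is_lt _) (Fin.is_lt _)
      e1 e2 e3 e4 e5 e6 e7 e8
      (vne _ _ d1) (vne _ _ d3) (vne _ _ d4) (vne _ _ d7) (vne _ _ d10) (vne _ _ d13)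
      (vne _ _ d16) (vne _ _ d19) (vne _ _ d22)
    obtain ⟨k1, k2⟩ := key
    have eq1 : c s((8 : Fin 12), 0) = c s((11 : Fin 12), 7) := Fin.ext k1
    have eq2 : c s((9 : Fin 12), 5) = c s((10 : Fin 12), 2) := Fin.ext k2
    by_cases hab : c s((8 : Fin 12), 0) = c s((9 : Fin 12), 5)
    · exact Or.inl ⟨eq1, eq2, hab⟩
    · exact Or.inr ⟨eq1, eq2, hab⟩
  refine ⟨⟨blanusaCol1, blanusaCol1_proper, by decide, by decide, by decide⟩,
    ⟨blanusaCol2, blanusaCol2_proper, by decide, by decide, by decide⟩⟩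
end

section
/- Let G be a 2-connected cubic graph drawn in the plane with precisely one crossing, involving edges x x''' and x' x''. Let G* be obtained from G by deleting these two edges and inserting a Blanuša block B_0, joining x to a, x''' to a', x' to b, and x'' to b'. Then G* is 3-edge-colorable if and only if G is 3-edge-colorable. -/
open SimpleGraph Classical

/-- `G` is 2-connected: at least 3 vertices, connected, and no cutvertex. -/
def IsTwoConnected {V : Type*} [Fintype V] (G : SimpleGraph V) : Prop :=
  3 ≤ Fintype.card V ∧ G.Connected ∧ ∀ v : V, (G.induce {u | u ≠ v}).Connected

section BlanusaAux

open SimpleGraph Classical Sum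

private def half3 (α β : Fin 3) : Fin 8 → Fin 3
  | ⟨0, _⟩ => α
  | ⟨2, _⟩ => β
  | ⟨5, _⟩ => β
  | ⟨7, _⟩ => α
  | _ => 0

private def tab3 : Fin 3 → Fin 3 → Fin 8 → Fin 8 → Fin 3 :=
  ![![![![0, 1, 0, 2, 0, 0, 0, 0], ![1, 0, 2, 0, 0, 0, 0, 0], ![0, 2, 0, 0, 1, 0, 0, 0], ![2, 0, 0, 0, 0, 1, 0, 0], ![0, 0, 1, 0, 0, 0, 0, 2], ![0, 0, 0, 1, 0, 0, 2, 0], ![0, 0, 0, 0, 0, 2, 0, 1], ![0, 0, 0, 0, 2, 0, 1, 0]],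
   ![![0, 1, 0, 2, 0, 0, 0, 0], ![1, 0, 2, 0, 0, 0, 0, 0], ![0, 2, 0, 0, 0, 0, 0, 0], ![2, 0, 0, 0, 1, 0, 0, 0], ![0, 0, 0, 1, 0, 0, 0, 2], ![0, 0, 0, 0, 0, 0, 2, 0], ![0, 0, 0, 0, 0, 2, 0, 1], ![0, 0, 0, 0, 2, 0, 1, 0]],
   ![![0, 1, 0, 2, 0, 0, 0, 0], ![1, 0, 0, 0, 0, 0, 2, 0], ![0, 0, 0, 0, 1, 0, 0, 0], ![2, 0, 0, 0, 0, 1, 0, 0], ![0, 0, 1, 0, 0, 0, 0, 2], ![0, 0, 0, 1, 0, 0, 0, 0], ![0, 2, 0, 0, 0, 0, 0, 1], ![0, 0, 0, 0, 2, 0, 1, 0]]],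
  ![![![0, 0, 0, 2, 0, 0, 0, 0], ![0, 0, 2, 0, 0, 0, 1, 0], ![0, 2, 0, 0, 1, 0, 0, 0], ![2, 0, 0, 0, 0, 1, 0, 0], ![0, 0, 1, 0, 0, 0, 0, 2], ![0, 0, 0, 1, 0, 0, 2, 0], ![0, 1, 0, 0, 0, 2, 0, 0], ![0, 0, 0, 0, 2, 0, 0, 0]],
   ![![0, 0, 0, 2, 0, 0, 0, 0], ![0, 0, 2, 0, 0, 0, 1, 0], ![0, 2, 0, 0, 0, 0, 0, 0], ![2, 0, 0, 0, 1, 0, 0, 0], ![0, 0, 0, 1, 0, 0, 0, 2], ![0, 0, 0, 0, 0, 0, 2, 0], ![0, 1, 0, 0, 0, 2, 0, 0], ![0, 0, 0, 0, 2, 0, 0, 0]],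
   ![![0, 0, 0, 2, 0, 0, 0, 0], ![0, 0, 1, 0, 0, 0, 2, 0], ![0, 1, 0, 0, 0, 0, 0, 0], ![2, 0, 0, 0, 1, 0, 0, 0], ![0, 0, 0, 1, 0, 0, 0, 2], ![0, 0, 0, 0, 0, 0, 1, 0], ![0, 2, 0, 0, 0, 1, 0, 0], ![0, 0, 0, 0, 2, 0, 0, 0]]],
  ![![![0, 0, 0, 1, 0, 0, 0, 0], ![0, 0, 1, 0, 0, 0, 2, 0], ![0, 1, 0, 0, 2, 0, 0, 0], ![1, 0, 0, 0, 0, 2, 0, 0], ![0, 0, 2, 0, 0, 0, 0, 1], ![0, 0, 0, 2, 0, 0, 1, 0], ![0, 2, 0, 0, 0, 1, 0, 0], ![0, 0, 0, 0, 1, 0, 0, 0]],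
   ![![0, 0, 0, 1, 0, 0, 0, 0], ![0, 0, 2, 0, 0, 0, 1, 0], ![0, 2, 0, 0, 0, 0, 0, 0], ![1, 0, 0, 0, 2, 0, 0, 0], ![0, 0, 0, 2, 0, 0, 0, 1], ![0, 0, 0, 0, 0, 0, 2, 0], ![0, 1, 0, 0, 0, 2, 0, 0], ![0, 0, 0, 0, 1, 0, 0, 0]],
   ![![0, 0, 0, 1, 0, 0, 0, 0], ![0, 0, 1, 0, 0, 0, 2, 0], ![0, 1, 0, 0, 0, 0, 0, 0], ![1, 0, 0, 0, 2, 0, 0, 0], ![0, 0, 0, 2, 0, 0, 0, 1], ![0, 0, 0, 0, 0, 0, 1, 0], ![0, 2, 0, 0, 0, 1, 0, 0], ![0, 0, 0, 0, 1, 0, 0, 0]]]]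


private lemma tab3_symm : ∀ (α β : Fin 3) (i j : Fin 8), tab3 α β i j = tab3 α β j i := by
  decide

private def hAux {V : Type*} (c : Sym2 V → Fin 3) (α β : Fin 3) :
    V ⊕ Fin 8 → V ⊕ Fin 8 → Fin 3
  | Sum.inl p, Sum.inl q => c s(p, q)
  | Sum.inl _, Sum.inr j => half3 α β j
  | Sum.inr i, Sum.inl _ => half3 α β i
  | Sum.inr i, Sum.inr j => tab3 α β i j

private lemma hAux_symm {V : Type*} (c : Sym2 V → Fin 3) (α β : Fin 3)
    (u v : V ⊕ Fin 8) : hAux c α β u v = hAux c α β v u := by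
  cases u <;> cases v <;> simp only [hAux]
  · rw [Sym2.eq_swap]
  · exact tab3_symm α β _ _

private noncomputable def starColor {V : Type*} (c : Sym2 V → Fin 3) (α β : Fin 3) :
    Sym2 (V ⊕ Fin 8) → Fin 3 :=
  Sym2.lift ⟨hAux c α β, hAux_symm c α β⟩

private lemma starColor_mk {V : Type*} (c : Sym2 V → Fin 3) (α β : Fin 3)
    (u v : V ⊕ Fin 8) : starColor c α β s(u, v) = hAux c α β u v := rfl

private lemma no_inr_map {V : Type*} (e0 : Sym2 V) (i : Fin 8) (u : V ⊕ Fin 8) :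
    Sym2.map Sum.inl e0 ≠ s(Sum.inr i, u) := by
  induction e0 using Sym2.ind with
  | _ p q => simp [Sym2.map_pair_eq, Sym2.eq_iff]

private lemma map_inl_eq {V : Type*} {e0 : Sym2 V} {p : V} {u : V ⊕ Fin 8}
    (h : Sym2.map Sum.inl e0 = s(Sum.inl p, u)) :
    ∃ q : V, u = Sum.inl q ∧ e0 = s(p, q) := by
  induction e0 using Sym2.ind with
  | _ a b =>
    rw [Sym2.map_pair_eq, Sym2.eq_iff] at h
    rcases h with ⟨h1, h2⟩ | ⟨h1, h2⟩
    · exact ⟨b, h2.symm, by rw [Sum.inl.injEq] at h1; rw [h1]⟩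
    · exact ⟨a, h1.symm, by rw [Sum.inl.injEq] at h2; rw [h2, Sym2.eq_swap]⟩

private lemma inr_not_mem_map {V : Type*} (g : Sym2 V) (j : Fin 8) :
    Sum.inr j ∉ Sym2.map (Sum.inl : V → V ⊕ Fin 8) g := by
  induction g using Sym2.ind with
  | _ p q => simp [Sym2.map_pair_eq, Sym2.mem_iff]

private lemma map_not_diag {V : Type*} {G : SimpleGraph V} {e : Sym2 V}
    (he : e ∈ G.edgeSet) : ¬ (Sym2.map (Sum.inl : V → V ⊕ Fin 8) e).IsDiag := by
  induction e using Sym2.ind with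
  | _ p q =>
    rw [Sym2.map_pair_eq, Sym2.mk_isDiag_iff, Sum.inl.injEq]
    exact G.ne_of_adj ((SimpleGraph.mem_edgeSet G).mp he)

private lemma fin3_add (x y z : Fin 3) (h1 : x ≠ y) (h2 : x ≠ z) (h3 : y ≠ z) :
    (x : ℕ) + y + z = 3 := by revert x y z; decide

set_option maxHeartbeats 1000000 in
private lemma blanusaKeyNat (a a' b b' c01 c12 c56 c67 c34 c03 c35 c16 c24 c47 : ℕ)
    (ha : a < 3) (ha' : a' < 3) (hb : b < 3) (hb' : b' < 3)
    (h01 : c01 < 3) (h12 : c12 < 3) (h56 : c56 < 3) (h67 : c67 < 3)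
    (h34 : c34 < 3) (h03 : c03 < 3) (h35 : c35 < 3) (h16 : c16 < 3)
    (h24 : c24 < 3) (h47 : c47 < 3)
    (v0 : a ≠ c01 ∧ a + c01 + c03 = 3)
    (v1 : c01 ≠ c12 ∧ c01 + c12 + c16 = 3)
    (v2 : b' ≠ c12 ∧ b' + c12 + c24 = 3)
    (v3 : c34 ≠ c03 ∧ c34 + c03 + c35 = 3)
    (v4 : c34 ≠ c24 ∧ c34 + c24 + c47 = 3)
    (v5 : b ≠ c56 ∧ b + c56 + c35 = 3)
    (v6 : c56 ≠ c67 ∧ c56 + c67 + c16 = 3)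
    (v7 : a' ≠ c67 ∧ a' + c67 + c47 = 3) :
    a = a' ∧ b = b' := by
  interval_cases a <;> interval_cases c01 <;> interval_cases c12 <;> omega

private lemma star_proper {V : Type*} (G : SimpleGraph V) (x x' x'' x''' : V)
    (hd1 : x ≠ x') (hd2 : x ≠ x'') (hd3 : x ≠ x''') (hd4 : x' ≠ x'')
    (hd5 : x' ≠ x''') (hd6 : x'' ≠ x''')
    (he1 : G.Adj x x''') (he2 : G.Adj x' x'')
    (c : Sym2 V → Fin 3) (hc : IsProper3EdgeColoring G c)
    (α β : Fin 3) (hα : c s(x, x''') = α) (hβ : c s(x', x'') = β) :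
    IsProper3EdgeColoring (blanusaInsert G x x' x'' x''') (starColor c α β) := by
  have hkey : ∀ (g : Sym2 V), g ∈ G.edgeSet → ∀ y z : V, G.Adj y z → g ≠ s(y,z) →
      ∀ v0 : V, v0 ∈ g → (v0 = y ∨ v0 = z) → c g ≠ c s(y,z) := by
    intro g hg y z hyz hne' v0 hv0 hvy
    refine hc _ hg _ (G.mem_edgeSet.mpr hyz) hne' ⟨v0, hv0, ?_⟩
    rcases hvy with rfl | rfl
    exacts [Sym2.mem_mk_left _ _, Sym2.mem_mk_right _ _]
  intro e he f hf hne hsh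
  obtain ⟨w, hwe, hwf⟩ := hsh
  obtain ⟨u, rfl⟩ := Sym2.mem_iff_exists.mp hwe
  obtain ⟨v, rfl⟩ := Sym2.mem_iff_exists.mp hwf
  rw [blanusaInsert, SimpleGraph.edgeSet_fromEdgeSet] at he hf
  replace he := he.1
  replace hf := hf.1
  cases w with
  | inl p =>
    simp only [Set.mem_union, Set.mem_image, Set.mem_insert_iff, Set.mem_singleton_iff,
      Set.mem_diff, Sym2.eq_iff, Sum.inl.injEq, Sum.inr.injEq, reduceCtorEq, false_and,
      and_false, false_or, or_false, not_or] at he hf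
    rcases he with ⟨e0, ⟨he0, he0s1, he0s2⟩, heq⟩ | ⟨rfl, rfl⟩ | ⟨rfl, rfl⟩ | ⟨rfl, rfl⟩ | ⟨rfl, rfl⟩
    · obtain ⟨q1, rfl, rfl⟩ := map_inl_eq heq
      rcases hf with ⟨f0, ⟨hf0, hf0s1, hf0s2⟩, heq2⟩ | ⟨rfl, rfl⟩ | ⟨rfl, rfl⟩ | ⟨rfl, rfl⟩ | ⟨rfl, rfl⟩
      · obtain ⟨q2, rfl, rfl⟩ := map_inl_eq heq2
        exact hc _ he0 _ hf0 (fun hh => hne (congrArg (Sym2.map Sum.inl) hh))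
          ⟨p, Sym2.mem_mk_left p q1, Sym2.mem_mk_left p q2⟩
      · exact hα ▸ hkey _ he0 _ _ he1 he0s1 _ (Sym2.mem_mk_left _ _) (Or.inl rfl)
      · exact hα ▸ hkey _ he0 _ _ he1 he0s1 _ (Sym2.mem_mk_left _ _) (Or.inr rfl)
      · exact hβ ▸ hkey _ he0 _ _ he2 he0s2 _ (Sym2.mem_mk_left _ _) (Or.inl rfl)
      · exact hβ ▸ hkey _ he0 _ _ he2 he0s2 _ (Sym2.mem_mk_left _ _) (Or.inr rfl)
    · rcases hf with ⟨f0, ⟨hf0, hf0s1, hf0s2⟩, heq2⟩ | ⟨hq, rfl⟩ | ⟨hq, rfl⟩ | ⟨hq, rfl⟩ | ⟨hq, rfl⟩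
      · obtain ⟨q2, rfl, rfl⟩ := map_inl_eq heq2
        exact (hα ▸ hkey _ hf0 _ _ he1 hf0s1 _ (Sym2.mem_mk_left _ _) (Or.inl rfl)).symm
      · exact absurd rfl hne
      · exact absurd hq hd3
      · exact absurd hq hd1
      · exact absurd hq hd2
    · rcases hf with ⟨f0, ⟨hf0, hf0s1, hf0s2⟩, heq2⟩ | ⟨hq, rfl⟩ | ⟨hq, rfl⟩ | ⟨hq, rfl⟩ | ⟨hq, rfl⟩
      · obtain ⟨q2, rfl, rfl⟩ := map_inl_eq heq2
        exact (hα ▸ hkey _ hf0 _ _ he1 hf0s1 _ (Sym2.mem_mk_left _ _) (Or.inr rfl)).symm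
      · exact absurd hq hd3.symm
      · exact absurd rfl hne
      · exact absurd hq hd5.symm
      · exact absurd hq hd6.symm
    · rcases hf with ⟨f0, ⟨hf0, hf0s1, hf0s2⟩, heq2⟩ | ⟨hq, rfl⟩ | ⟨hq, rfl⟩ | ⟨hq, rfl⟩ | ⟨hq, rfl⟩
      · obtain ⟨q2, rfl, rfl⟩ := map_inl_eq heq2
        exact (hβ ▸ hkey _ hf0 _ _ he2 hf0s2 _ (Sym2.mem_mk_left _ _) (Or.inl rfl)).symm
      · exact absurd hq hd1.symm
      · exact absurd hq hd5
      · exact absurd rfl hne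
      · exact absurd hq hd4
    · rcases hf with ⟨f0, ⟨hf0, hf0s1, hf0s2⟩, heq2⟩ | ⟨hq, rfl⟩ | ⟨hq, rfl⟩ | ⟨hq, rfl⟩ | ⟨hq, rfl⟩
      · obtain ⟨q2, rfl, rfl⟩ := map_inl_eq heq2
        exact (hβ ▸ hkey _ hf0 _ _ he2 hf0s2 _ (Sym2.mem_mk_left _ _) (Or.inr rfl)).symm
      · exact absurd hq hd2.symm
      · exact absurd hq hd6
      · exact absurd hq hd4.symm
      · exact absurd rfl hne
  | inr i =>
    simp only [Set.mem_union, Set.mem_image, Set.mem_insert_iff, Set.mem_singleton_iff,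
      Set.mem_diff, Sym2.eq_iff, Sum.inl.injEq, Sum.inr.injEq, reduceCtorEq, false_and,
      and_false, false_or, or_false, not_or] at he hf
    rcases he with ⟨e0, -, heq⟩ | he
    · exact absurd heq (no_inr_map e0 i u)
    rcases hf with ⟨f0, -, heq2⟩ | hf
    · exact absurd heq2 (no_inr_map f0 i v)
    clear hα hβ hkey hc
    rcases he with (⟨rfl,rfl⟩|⟨rfl,rfl⟩|⟨rfl,rfl⟩|⟨rfl,rfl⟩|(⟨rfl,rfl⟩|⟨rfl,rfl⟩)|(⟨rfl,rfl⟩|⟨rfl,rfl⟩)|(⟨rfl,rfl⟩|⟨rfl,rfl⟩)|(⟨rfl,rfl⟩|⟨rfl,rfl⟩)|(⟨rfl,rfl⟩|⟨rfl,rfl⟩)|(⟨rfl,rfl⟩|⟨rfl,rfl⟩)|(⟨rfl,rfl⟩|⟨rfl,rfl⟩)|(⟨rfl,rfl⟩|⟨rfl,rfl⟩)|(⟨rfl,rfl⟩|⟨rfl,rfl⟩)|(⟨rfl,rfl⟩|⟨rfl,rfl⟩)) <;>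
    rcases hf with (⟨hq,rfl⟩|⟨hq,rfl⟩|⟨hq,rfl⟩|⟨hq,rfl⟩|(⟨hq,rfl⟩|⟨hq,rfl⟩)|(⟨hq,rfl⟩|⟨hq,rfl⟩)|(⟨hq,rfl⟩|⟨hq,rfl⟩)|(⟨hq,rfl⟩|⟨hq,rfl⟩)|(⟨hq,rfl⟩|⟨hq,rfl⟩)|(⟨hq,rfl⟩|⟨hq,rfl⟩)|(⟨hq,rfl⟩|⟨hq,rfl⟩)|(⟨hq,rfl⟩|⟨hq,rfl⟩)|(⟨hq,rfl⟩|⟨hq,rfl⟩)|(⟨hq,rfl⟩|⟨hq,rfl⟩)) <;>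
    first
      | exact absurd rfl hne
      | exact absurd hq (by decide)
      | (simp only [starColor_mk, hAux]; revert α β; decide)

set_option maxHeartbeats 2000000 in
private lemma star_forward {V : Type*} (G : SimpleGraph V) (x x' x'' x''' : V)
    (hd1 : x ≠ x') (hd2 : x ≠ x'') (hd3 : x ≠ x''') (hd4 : x' ≠ x'')
    (hd5 : x' ≠ x''') (hd6 : x'' ≠ x''')
    (h : Proper3EdgeColorable (blanusaInsert G x x' x'' x''')) :
    Proper3EdgeColorable G := by
  obtain ⟨cs, hcs⟩ := h
  have memE : ∀ (a b : V ⊕ Fin 8), s(a, b) ∈ ({s(Sum.inl x, Sum.inr 0), s(Sum.inl x''', Sum.inr 7), s(Sum.inl x', Sum.inr 2), s(Sum.inl x'', Sum.inr 5), s(Sum.inr (0 : Fin 8), Sum.inr 1), s(Sum.inr (1 : Fin 8), Sum.inr 2), s(Sum.inr (5 : Fin 8), Sum.inr 6), s(Sum.inr (6 : Fin 8), Sum.inr 7), s(Sum.inr (3 : Fin 8), Sum.inr 4), s(Sum.inr (0 : Fin 8), Sum.inr 3), s(Sum.inr (3 : Fin 8), Sum.inr 5), s(Sum.inr (1 : Fin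 8), Sum.inr 6), s(Sum.inr (2 : Fin 8), Sum.inr 4), s(Sum.inr (4 : Fin 8), Sum.inr 7)} : Set (Sym2 (V ⊕ Fin 8))) → a ≠ b →
      s(a, b) ∈ (blanusaInsert G x x' x'' x''').edgeSet := by
    intro a b hab hne
    rw [blanusaInsert, SimpleGraph.edgeSet_fromEdgeSet]
    exact ⟨Or.inr hab, by rwa [Sym2.mem_diagSet, Sym2.mk_isDiag_iff]⟩
  have Q : ∀ (a b a' b' w : V ⊕ Fin 8), s(a, b) ∈ ({s(Sum.inl x, Sum.inr 0), s(Sum.inl x''', Sum.inr 7), s(Sum.inl x', Sum.inr 2), s(Sum.inl x'', Sum.inr 5), s(Sum.inr (0 : Fin 8), Sum.inr 1), s(Sum.inr (1 : Fin 8), Sum.inr 2), s(Sum.inr (5 : Fin 8), Sum.inr 6), s(Sum.inr (6 : Fin 8), Sum.inr 7), s(Sum.inr (3 : Fin 8), Sum.inr 4), s(Sum.inr (0 : Fin 8), Sum.inr 3), s(Sum.inr (3 : Fin 8), Sum.inr 5), s(Sum.inr (1 : Fin 8), Sum.inr 6), s(Sum.inr (2 : Fin 8), Sum.inr 4), s(Sum.inr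 (4 : Fin 8), Sum.inr 7)} : Set (Sym2 (V ⊕ Fin 8))) → s(a', b') ∈ ({s(Sum.inl x, Sum.inr 0), s(Sum.inl x''', Sum.inr 7), s(Sum.inl x', Sum.inr 2), s(Sum.inl x'', Sum.inr 5), s(Sum.inr (0 : Fin 8), Sum.inr 1), s(Sum.inr (1 : Fin 8), Sum.inr 2), s(Sum.inr (5 : Fin 8), Sum.inr 6), s(Sum.inr (6 : Fin 8), Sum.inr 7), s(Sum.inr (3 : Fin 8), Sum.inr 4), s(Sum.inr (0 : Fin 8), Sum.inr 3), s(Sum.inr (3 : Fin 8), Sum.inr 5), s(Sum.inr (1 : Fin 8), Sum.inr 6), s(Sum.inr (2 : Fin 8), Sum.inr 4), s(Sum.inr (4 : Fin 8), Sum.inr 7)} : Set (Sym2 (V ⊕ Fin 8))) →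
      a ≠ b → a' ≠ b' → s(a, b) ≠ s(a', b') → w ∈ s(a, b) → w ∈ s(a', b') →
      cs s(a, b) ≠ cs s(a', b') := by
    intro a b a' b' w m1 m2 n1 n2 n3 w1 w2
    exact hcs _ (memE a b m1 n1) _ (memE a' b' m2 n2) n3 ⟨w, w1, w2⟩
  have d0a : cs s(Sum.inl x, Sum.inr 0) ≠ cs s((Sum.inr 0 : V ⊕ Fin 8), Sum.inr 1) :=
    Q _ _ _ _ (Sum.inr 0) (Set.mem_insert _ _) (Set.mem_insert_of_mem _ (Set.mem_insert_of_mem _ (Set.mem_insert_of_mem _ (Set.mem_insert_of_mem _ (Set.mem_insert _ _))))) (by simp) (by simp)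
      (by simp [Sym2.eq_iff]) (by simp [Sym2.mem_iff]) (by simp [Sym2.mem_iff])
  have d0b : cs s(Sum.inl x, Sum.inr 0) ≠ cs s((Sum.inr 0 : V ⊕ Fin 8), Sum.inr 3) :=
    Q _ _ _ _ (Sum.inr 0) (Set.mem_insert _ _) (Set.mem_insert_of_mem _ (Set.mem_insert_of_mem _ (Set.mem_insert_of_mem _ (Set.mem_insert_of_mem _ (Set.mem_insert_of_mem _ (Set.mem_insert_of_mem _ (Set.mem_insert_of_mem _ (Set.mem_insert_of_mem _ (Set.mem_insert_of_mem _ (Set.mem_insert _ _)))))))))) (by simp) (by simp)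
      (by simp [Sym2.eq_iff]) (by simp [Sym2.mem_iff]) (by simp [Sym2.mem_iff])
  have d0c : cs s((Sum.inr 0 : V ⊕ Fin 8), Sum.inr 1) ≠ cs s((Sum.inr 0 : V ⊕ Fin 8), Sum.inr 3) :=
    Q _ _ _ _ (Sum.inr 0) (Set.mem_insert_of_mem _ (Set.mem_insert_of_mem _ (Set.mem_insert_of_mem _ (Set.mem_insert_of_mem _ (Set.mem_insert _ _))))) (Set.mem_insert_of_mem _ (Set.mem_insert_of_mem _ (Set.mem_insert_of_mem _ (Set.mem_insert_of_mem _ (Set.mem_insert_of_mem _ (Set.mem_insert_of_mem _ (Set.mem_insert_of_mem _ (Set.mem_insert_of_mem _ (Set.mem_insert_of_mem _ (Set.mem_insert _ _)))))))))) (by simp) (by simp)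
      (by simp [Sym2.eq_iff]) (by simp [Sym2.mem_iff]) (by simp [Sym2.mem_iff])
  have d1a : cs s((Sum.inr 0 : V ⊕ Fin 8), Sum.inr 1) ≠ cs s((Sum.inr 1 : V ⊕ Fin 8), Sum.inr 2) :=
    Q _ _ _ _ (Sum.inr 1) (Set.mem_insert_of_mem _ (Set.mem_insert_of_mem _ (Set.mem_insert_of_mem _ (Set.mem_insert_of_mem _ (Set.mem_insert _ _))))) (Set.mem_insert_of_mem _ (Set.mem_insert_of_mem _ (Set.mem_insert_of_mem _ (Set.mem_insert_of_mem _ (Set.mem_insert_of_mem _ (Set.mem_insert _ _)))))) (by simp) (by simp)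
      (by simp [Sym2.eq_iff]) (by simp [Sym2.mem_iff]) (by simp [Sym2.mem_iff])
  have d1b : cs s((Sum.inr 0 : V ⊕ Fin 8), Sum.inr 1) ≠ cs s((Sum.inr 1 : V ⊕ Fin 8), Sum.inr 6) :=
    Q _ _ _ _ (Sum.inr 1) (Set.mem_insert_of_mem _ (Set.mem_insert_of_mem _ (Set.mem_insert_of_mem _ (Set.mem_insert_of_mem _ (Set.mem_insert _ _))))) (Set.mem_insert_of_mem _ (Set.mem_insert_of_mem _ (Set.mem_insert_of_mem _ (Set.mem_insert_of_mem _ (Set.mem_insert_of_mem _ (Set.mem_insert_of_mem _ (Set.mem_insert_of_mem _ (Set.mem_insert_of_mem _ (Set.mem_insert_of_mem _ (Set.mem_insert_of_mem _ (Set.mem_insert_of_mem _ (Set.mem_insert _ _)))))))))))) (by simp) (by simp)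
      (by simp [Sym2.eq_iff]) (by simp [Sym2.mem_iff]) (by simp [Sym2.mem_iff])
  have d1c : cs s((Sum.inr 1 : V ⊕ Fin 8), Sum.inr 2) ≠ cs s((Sum.inr 1 : V ⊕ Fin 8), Sum.inr 6) :=
    Q _ _ _ _ (Sum.inr 1) (Set.mem_insert_of_mem _ (Set.mem_insert_of_mem _ (Set.mem_insert_of_mem _ (Set.mem_insert_of_mem _ (Set.mem_insert_of_mem _ (Set.mem_insert _ _)))))) (Set.mem_insert_of_mem _ (Set.mem_insert_of_mem _ (Set.mem_insert_of_mem _ (Set.mem_insert_of_mem _ (Set.mem_insert_of_mem _ (Set.mem_insert_of_mem _ (Set.mem_insert_of_mem _ (Set.mem_insert_of_mem _ (Set.mem_insert_of_mem _ (Set.mem_insert_of_mem _ (Set.mem_insert_of_mem _ (Set.mem_insert _ _)))))))))))) (by simp) (by simp)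
      (by simp [Sym2.eq_iff]) (by simp [Sym2.mem_iff]) (by simp [Sym2.mem_iff])
  have d2a : cs s(Sum.inl x', Sum.inr 2) ≠ cs s((Sum.inr 1 : V ⊕ Fin 8), Sum.inr 2) :=
    Q _ _ _ _ (Sum.inr 2) (Set.mem_insert_of_mem _ (Set.mem_insert_of_mem _ (Set.mem_insert _ _))) (Set.mem_insert_of_mem _ (Set.mem_insert_of_mem _ (Set.mem_insert_of_mem _ (Set.mem_insert_of_mem _ (Set.mem_insert_of_mem _ (Set.mem_insert _ _)))))) (by simp) (by simp)
      (by simp [Sym2.eq_iff]) (by simp [Sym2.mem_iff]) (by simp [Sym2.mem_iff])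
  have d2b : cs s(Sum.inl x', Sum.inr 2) ≠ cs s((Sum.inr 2 : V ⊕ Fin 8), Sum.inr 4) :=
    Q _ _ _ _ (Sum.inr 2) (Set.mem_insert_of_mem _ (Set.mem_insert_of_mem _ (Set.mem_insert _ _))) (Set.mem_insert_of_mem _ (Set.mem_insert_of_mem _ (Set.mem_insert_of_mem _ (Set.mem_insert_of_mem _ (Set.mem_insert_of_mem _ (Set.mem_insert_of_mem _ (Set.mem_insert_of_mem _ (Set.mem_insert_of_mem _ (Set.mem_insert_of_mem _ (Set.mem_insert_of_mem _ (Set.mem_insert_of_mem _ (Set.mem_insert_of_mem _ (Set.mem_insert _ _))))))))))))) (by simp) (by simp)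
      (by simp [Sym2.eq_iff]) (by simp [Sym2.mem_iff]) (by simp [Sym2.mem_iff])
  have d2c : cs s((Sum.inr 1 : V ⊕ Fin 8), Sum.inr 2) ≠ cs s((Sum.inr 2 : V ⊕ Fin 8), Sum.inr 4) :=
    Q _ _ _ _ (Sum.inr 2) (Set.mem_insert_of_mem _ (Set.mem_insert_of_mem _ (Set.mem_insert_of_mem _ (Set.mem_insert_of_mem _ (Set.mem_insert_of_mem _ (Set.mem_insert _ _)))))) (Set.mem_insert_of_mem _ (Set.mem_insert_of_mem _ (Set.mem_insert_of_mem _ (Set.mem_insert_of_mem _ (Set.mem_insert_of_mem _ (Set.mem_insert_of_mem _ (Set.mem_insert_of_mem _ (Set.mem_insert_of_mem _ (Set.mem_insert_of_mem _ (Set.mem_insert_of_mem _ (Set.mem_insert_of_mem _ (Set.mem_insert_of_mem _ (Set.mem_insert _ _))))))))))))) (by simp) (by simp)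
      (by simp [Sym2.eq_iff]) (by simp [Sym2.mem_iff]) (by simp [Sym2.mem_iff])
  have d3a : cs s((Sum.inr 3 : V ⊕ Fin 8), Sum.inr 4) ≠ cs s((Sum.inr 0 : V ⊕ Fin 8), Sum.inr 3) :=
    Q _ _ _ _ (Sum.inr 3) (Set.mem_insert_of_mem _ (Set.mem_insert_of_mem _ (Set.mem_insert_of_mem _ (Set.mem_insert_of_mem _ (Set.mem_insert_of_mem _ (Set.mem_insert_of_mem _ (Set.mem_insert_of_mem _ (Set.mem_insert_of_mem _ (Set.mem_insert _ _))))))))) (Set.mem_insert_of_mem _ (Set.mem_insert_of_mem _ (Set.mem_insert_of_mem _ (Set.mem_insert_of_mem _ (Set.mem_insert_of_mem _ (Set.mem_insert_of_mem _ (Set.mem_insert_of_mem _ (Set.mem_insert_of_mem _ (Set.mem_insert_of_mem _ (Set.mem_insert _ _)))))))))) (by simp) (by simp)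
      (by simp [Sym2.eq_iff]) (by simp [Sym2.mem_iff]) (by simp [Sym2.mem_iff])
  have d3b : cs s((Sum.inr 3 : V ⊕ Fin 8), Sum.inr 4) ≠ cs s((Sum.inr 3 : V ⊕ Fin 8), Sum.inr 5) :=
    Q _ _ _ _ (Sum.inr 3) (Set.mem_insert_of_mem _ (Set.mem_insert_of_mem _ (Set.mem_insert_of_mem _ (Set.mem_insert_of_mem _ (Set.mem_insert_of_mem _ (Set.mem_insert_of_mem _ (Set.mem_insert_of_mem _ (Set.mem_insert_of_mem _ (Set.mem_insert _ _))))))))) (Set.mem_insert_of_mem _ (Set.mem_insert_of_mem _ (Set.mem_insert_of_mem _ (Set.mem_insert_of_mem _ (Set.mem_insert_of_mem _ (Set.mem_insert_of_mem _ (Set.mem_insert_of_mem _ (Set.mem_insert_of_mem _ (Set.mem_insert_of_mem _ (Set.mem_insert_of_mem _ (Set.mem_insert _ _))))))))))) (by simp) (by simp)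
      (by simp [Sym2.eq_iff]) (by simp [Sym2.mem_iff]) (by simp [Sym2.mem_iff])
  have d3c : cs s((Sum.inr 0 : V ⊕ Fin 8), Sum.inr 3) ≠ cs s((Sum.inr 3 : V ⊕ Fin 8), Sum.inr 5) :=
    Q _ _ _ _ (Sum.inr 3) (Set.mem_insert_of_mem _ (Set.mem_insert_of_mem _ (Set.mem_insert_of_mem _ (Set.mem_insert_of_mem _ (Set.mem_insert_of_mem _ (Set.mem_insert_of_mem _ (Set.mem_insert_of_mem _ (Set.mem_insert_of_mem _ (Set.mem_insert_of_mem _ (Set.mem_insert _ _)))))))))) (Set.mem_insert_of_mem _ (Set.mem_insert_of_mem _ (Set.mem_insert_of_mem _ (Set.mem_insert_of_mem _ (Set.mem_insert_of_mem _ (Set.mem_insert_of_mem _ (Set.mem_insert_of_mem _ (Set.mem_insert_of_mem _ (Set.mem_insert_of_mem _ (Set.mem_insert_of_mem _ (Set.mem_insert _ _))))))))))) (by simp) (by simp)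
      (by simp [Sym2.eq_iff]) (by simp [Sym2.mem_iff]) (by simp [Sym2.mem_iff])
  have d4a : cs s((Sum.inr 3 : V ⊕ Fin 8), Sum.inr 4) ≠ cs s((Sum.inr 2 : V ⊕ Fin 8), Sum.inr 4) :=
    Q _ _ _ _ (Sum.inr 4) (Set.mem_insert_of_mem _ (Set.mem_insert_of_mem _ (Set.mem_insert_of_mem _ (Set.mem_insert_of_mem _ (Set.mem_insert_of_mem _ (Set.mem_insert_of_mem _ (Set.mem_insert_of_mem _ (Set.mem_insert_of_mem _ (Set.mem_insert _ _))))))))) (Set.mem_insert_of_mem _ (Set.mem_insert_of_mem _ (Set.mem_insert_of_mem _ (Set.mem_insert_of_mem _ (Set.mem_insert_of_mem _ (Set.mem_insert_of_mem _ (Set.mem_insert_of_mem _ (Set.mem_insert_of_mem _ (Set.mem_insert_of_mem _ (Set.mem_insert_of_mem _ (Set.mem_insert_of_mem _ (Set.mem_insert_of_mem _ (Set.mem_insert _ _))))))))))))) (by simp) (by simp)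
      (by simp [Sym2.eq_iff]) (by simp [Sym2.mem_iff]) (by simp [Sym2.mem_iff])
  have d4b : cs s((Sum.inr 3 : V ⊕ Fin 8), Sum.inr 4) ≠ cs s((Sum.inr 4 : V ⊕ Fin 8), Sum.inr 7) :=
    Q _ _ _ _ (Sum.inr 4) (Set.mem_insert_of_mem _ (Set.mem_insert_of_mem _ (Set.mem_insert_of_mem _ (Set.mem_insert_of_mem _ (Set.mem_insert_of_mem _ (Set.mem_insert_of_mem _ (Set.mem_insert_of_mem _ (Set.mem_insert_of_mem _ (Set.mem_insert _ _))))))))) (Set.mem_insert_of_mem _ (Set.mem_insert_of_mem _ (Set.mem_insert_of_mem _ (Set.mem_insert_of_mem _ (Set.mem_insert_of_mem _ (Set.mem_insert_of_mem _ (Set.mem_insert_of_mem _ (Set.mem_insert_of_mem _ (Set.mem_insert_of_mem _ (Set.mem_insert_of_mem _ (Set.mem_insert_of_mem _ (Set.mem_insert_of_mem _ (Set.mem_insert_of_mem _ (rfl)))))))))))))) (by simp) (by simp)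
      (by simp [Sym2.eq_iff]) (by simp [Sym2.mem_iff]) (by simp [Sym2.mem_iff])
  have d4c : cs s((Sum.inr 2 : V ⊕ Fin 8), Sum.inr 4) ≠ cs s((Sum.inr 4 : V ⊕ Fin 8), Sum.inr 7) :=
    Q _ _ _ _ (Sum.inr 4) (Set.mem_insert_of_mem _ (Set.mem_insert_of_mem _ (Set.mem_insert_of_mem _ (Set.mem_insert_of_mem _ (Set.mem_insert_of_mem _ (Set.mem_insert_of_mem _ (Set.mem_insert_of_mem _ (Set.mem_insert_of_mem _ (Set.mem_insert_of_mem _ (Set.mem_insert_of_mem _ (Set.mem_insert_of_mem _ (Set.mem_insert_of_mem _ (Set.mem_insert _ _))))))))))))) (Set.mem_insert_of_mem _ (Set.mem_insert_of_mem _ (Set.mem_insert_of_mem _ (Set.mem_insert_of_mem _ (Set.mem_insert_of_mem _ (Set.mem_insert_of_mem _ (Set.mem_insert_of_mem _ (Set.mem_insert_of_mem _ (Set.mem_insert_of_mem _ (Set.mem_insert_of_mem _ (Set.mem_insert_of_mem _ (Set.mem_insert_of_mem _ (Set.mem_insert_of_mem _ (rfl)))))))))))))) (by simp) (by simp)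
      (by simp [Sym2.eq_iff]) (by simp [Sym2.mem_iff]) (by simp [Sym2.mem_iff])
  have d5a : cs s(Sum.inl x'', Sum.inr 5) ≠ cs s((Sum.inr 5 : V ⊕ Fin 8), Sum.inr 6) :=
    Q _ _ _ _ (Sum.inr 5) (Set.mem_insert_of_mem _ (Set.mem_insert_of_mem _ (Set.mem_insert_of_mem _ (Set.mem_insert _ _)))) (Set.mem_insert_of_mem _ (Set.mem_insert_of_mem _ (Set.mem_insert_of_mem _ (Set.mem_insert_of_mem _ (Set.mem_insert_of_mem _ (Set.mem_insert_of_mem _ (Set.mem_insert _ _))))))) (by simp) (by simp)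
      (by simp [Sym2.eq_iff]) (by simp [Sym2.mem_iff]) (by simp [Sym2.mem_iff])
  have d5b : cs s(Sum.inl x'', Sum.inr 5) ≠ cs s((Sum.inr 3 : V ⊕ Fin 8), Sum.inr 5) :=
    Q _ _ _ _ (Sum.inr 5) (Set.mem_insert_of_mem _ (Set.mem_insert_of_mem _ (Set.mem_insert_of_mem _ (Set.mem_insert _ _)))) (Set.mem_insert_of_mem _ (Set.mem_insert_of_mem _ (Set.mem_insert_of_mem _ (Set.mem_insert_of_mem _ (Set.mem_insert_of_mem _ (Set.mem_insert_of_mem _ (Set.mem_insert_of_mem _ (Set.mem_insert_of_mem _ (Set.mem_insert_of_mem _ (Set.mem_insert_of_mem _ (Set.mem_insert _ _))))))))))) (by simp) (by simp)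
      (by simp [Sym2.eq_iff]) (by simp [Sym2.mem_iff]) (by simp [Sym2.mem_iff])
  have d5c : cs s((Sum.inr 5 : V ⊕ Fin 8), Sum.inr 6) ≠ cs s((Sum.inr 3 : V ⊕ Fin 8), Sum.inr 5) :=
    Q _ _ _ _ (Sum.inr 5) (Set.mem_insert_of_mem _ (Set.mem_insert_of_mem _ (Set.mem_insert_of_mem _ (Set.mem_insert_of_mem _ (Set.mem_insert_of_mem _ (Set.mem_insert_of_mem _ (Set.mem_insert _ _))))))) (Set.mem_insert_of_mem _ (Set.mem_insert_of_mem _ (Set.mem_insert_of_mem _ (Set.mem_insert_of_mem _ (Set.mem_insert_of_mem _ (Set.mem_insert_of_mem _ (Set.mem_insert_of_mem _ (Set.mem_insert_of_mem _ (Set.mem_insert_of_mem _ (Set.mem_insert_of_mem _ (Set.mem_insert _ _))))))))))) (by simp) (by simp)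
      (by simp [Sym2.eq_iff]) (by simp [Sym2.mem_iff]) (by simp [Sym2.mem_iff])
  have d6a : cs s((Sum.inr 5 : V ⊕ Fin 8), Sum.inr 6) ≠ cs s((Sum.inr 6 : V ⊕ Fin 8), Sum.inr 7) :=
    Q _ _ _ _ (Sum.inr 6) (Set.mem_insert_of_mem _ (Set.mem_insert_of_mem _ (Set.mem_insert_of_mem _ (Set.mem_insert_of_mem _ (Set.mem_insert_of_mem _ (Set.mem_insert_of_mem _ (Set.mem_insert _ _))))))) (Set.mem_insert_of_mem _ (Set.mem_insert_of_mem _ (Set.mem_insert_of_mem _ (Set.mem_insert_of_mem _ (Set.mem_insert_of_mem _ (Set.mem_insert_of_mem _ (Set.mem_insert_of_mem _ (Set.mem_insert _ _)))))))) (by simp) (by simp)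
      (by simp [Sym2.eq_iff]) (by simp [Sym2.mem_iff]) (by simp [Sym2.mem_iff])
  have d6b : cs s((Sum.inr 5 : V ⊕ Fin 8), Sum.inr 6) ≠ cs s((Sum.inr 1 : V ⊕ Fin 8), Sum.inr 6) :=
    Q _ _ _ _ (Sum.inr 6) (Set.mem_insert_of_mem _ (Set.mem_insert_of_mem _ (Set.mem_insert_of_mem _ (Set.mem_insert_of_mem _ (Set.mem_insert_of_mem _ (Set.mem_insert_of_mem _ (Set.mem_insert _ _))))))) (Set.mem_insert_of_mem _ (Set.mem_insert_of_mem _ (Set.mem_insert_of_mem _ (Set.mem_insert_of_mem _ (Set.mem_insert_of_mem _ (Set.mem_insert_of_mem _ (Set.mem_insert_of_mem _ (Set.mem_insert_of_mem _ (Set.mem_insert_of_mem _ (Set.mem_insert_of_mem _ (Set.mem_insert_of_mem _ (Set.mem_insert _ _)))))))))))) (by simp) (by simp)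
      (by simp [Sym2.eq_iff]) (by simp [Sym2.mem_iff]) (by simp [Sym2.mem_iff])
  have d6c : cs s((Sum.inr 6 : V ⊕ Fin 8), Sum.inr 7) ≠ cs s((Sum.inr 1 : V ⊕ Fin 8), Sum.inr 6) :=
    Q _ _ _ _ (Sum.inr 6) (Set.mem_insert_of_mem _ (Set.mem_insert_of_mem _ (Set.mem_insert_of_mem _ (Set.mem_insert_of_mem _ (Set.mem_insert_of_mem _ (Set.mem_insert_of_mem _ (Set.mem_insert_of_mem _ (Set.mem_insert _ _)))))))) (Set.mem_insert_of_mem _ (Set.mem_insert_of_mem _ (Set.mem_insert_of_mem _ (Set.mem_insert_of_mem _ (Set.mem_insert_of_mem _ (Set.mem_insert_of_mem _ (Set.mem_insert_of_mem _ (Set.mem_insert_of_mem _ (Set.mem_insert_of_mem _ (Set.mem_insert_of_mem _ (Set.mem_insert_of_mem _ (Set.mem_insert _ _)))))))))))) (by simp) (by simp)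
      (by simp [Sym2.eq_iff]) (by simp [Sym2.mem_iff]) (by simp [Sym2.mem_iff])
  have d7a : cs s(Sum.inl x''', Sum.inr 7) ≠ cs s((Sum.inr 6 : V ⊕ Fin 8), Sum.inr 7) :=
    Q _ _ _ _ (Sum.inr 7) (Set.mem_insert_of_mem _ (Set.mem_insert _ _)) (Set.mem_insert_of_mem _ (Set.mem_insert_of_mem _ (Set.mem_insert_of_mem _ (Set.mem_insert_of_mem _ (Set.mem_insert_of_mem _ (Set.mem_insert_of_mem _ (Set.mem_insert_of_mem _ (Set.mem_insert _ _)))))))) (by simp) (by simp)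
      (by simp [Sym2.eq_iff]) (by simp [Sym2.mem_iff]) (by simp [Sym2.mem_iff])
  have d7b : cs s(Sum.inl x''', Sum.inr 7) ≠ cs s((Sum.inr 4 : V ⊕ Fin 8), Sum.inr 7) :=
    Q _ _ _ _ (Sum.inr 7) (Set.mem_insert_of_mem _ (Set.mem_insert _ _)) (Set.mem_insert_of_mem _ (Set.mem_insert_of_mem _ (Set.mem_insert_of_mem _ (Set.mem_insert_of_mem _ (Set.mem_insert_of_mem _ (Set.mem_insert_of_mem _ (Set.mem_insert_of_mem _ (Set.mem_insert_of_mem _ (Set.mem_insert_of_mem _ (Set.mem_insert_of_mem _ (Set.mem_insert_of_mem _ (Set.mem_insert_of_mem _ (Set.mem_insert_of_mem _ (rfl)))))))))))))) (by simp) (by simp)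
      (by simp [Sym2.eq_iff]) (by simp [Sym2.mem_iff]) (by simp [Sym2.mem_iff])
  have d7c : cs s((Sum.inr 6 : V ⊕ Fin 8), Sum.inr 7) ≠ cs s((Sum.inr 4 : V ⊕ Fin 8), Sum.inr 7) :=
    Q _ _ _ _ (Sum.inr 7) (Set.mem_insert_of_mem _ (Set.mem_insert_of_mem _ (Set.mem_insert_of_mem _ (Set.mem_insert_of_mem _ (Set.mem_insert_of_mem _ (Set.mem_insert_of_mem _ (Set.mem_insert_of_mem _ (Set.mem_insert _ _)))))))) (Set.mem_insert_of_mem _ (Set.mem_insert_of_mem _ (Set.mem_insert_of_mem _ (Set.mem_insert_of_mem _ (Set.mem_insert_of_mem _ (Set.mem_insert_of_mem _ (Set.mem_insert_of_mem _ (Set.mem_insert_of_mem _ (Set.mem_insert_of_mem _ (Set.mem_insert_of_mem _ (Set.mem_insert_of_mem _ (Set.mem_insert_of_mem _ (Set.mem_insert_of_mem _ (rfl)))))))))))))) (by simp) (by simp)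
      (by simp [Sym2.eq_iff]) (by simp [Sym2.mem_iff]) (by simp [Sym2.mem_iff])
  have t0 := fin3_add _ _ _ d0a d0b d0c
  have t1 := fin3_add _ _ _ d1a d1b d1c
  have t2 := fin3_add _ _ _ d2a d2b d2c
  have t3 := fin3_add _ _ _ d3a d3b d3c
  have t4 := fin3_add _ _ _ d4a d4b d4c
  have t5 := fin3_add _ _ _ d5a d5b d5c
  have t6 := fin3_add _ _ _ d6a d6b d6c
  have t7 := fin3_add _ _ _ d7a d7b d7c
  have key := blanusaKeyNat (cs s(Sum.inl x, Sum.inr 0)).val (cs s(Sum.inl x''', Sum.inr 7)).val (cs s(Sum.inl x'', Sum.inr 5)).val (cs s(Sum.inl x', Sum.inr 2)).val (cs s((Sum.inr 0 : V ⊕ Fin 8), Sum.inr 1)).val (cs s((Sum.inr 1 : V ⊕ Fin 8), Sum.inr 2)).val (cs s((Sum.inr 5 : V ⊕ Fin 8), Sum.inr 6)).val (cs s((Sum.inr 6 : V ⊕ Fin 8), Sum.inr 7)).val (cs s((Sum.inr 3 : V ⊕ Fin 8), Sum.inr 4)).val (cs s((Sum.inr 0 : V ⊕ Fin 8), Sum.inr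 3)).val (cs s((Sum.inr 3 : V ⊕ Fin 8), Sum.inr 5)).val (cs s((Sum.inr 1 : V ⊕ Fin 8), Sum.inr 6)).val (cs s((Sum.inr 2 : V ⊕ Fin 8), Sum.inr 4)).val (cs s((Sum.inr 4 : V ⊕ Fin 8), Sum.inr 7)).val
    (Fin.is_lt _) (Fin.is_lt _) (Fin.is_lt _) (Fin.is_lt _) (Fin.is_lt _) (Fin.is_lt _) (Fin.is_lt _)
    (Fin.is_lt _) (Fin.is_lt _) (Fin.is_lt _) (Fin.is_lt _) (Fin.is_lt _) (Fin.is_lt _) (Fin.is_lt _)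
    ⟨fun hh => d0a (Fin.val_injective hh), t0⟩
    ⟨fun hh => d1a (Fin.val_injective hh), t1⟩
    ⟨fun hh => d2a (Fin.val_injective hh), t2⟩
    ⟨fun hh => d3a (Fin.val_injective hh), t3⟩
    ⟨fun hh => d4a (Fin.val_injective hh), t4⟩
    ⟨fun hh => d5a (Fin.val_injective hh), t5⟩
    ⟨fun hh => d6a (Fin.val_injective hh), t6⟩
    ⟨fun hh => d7a (Fin.val_injective hh), t7⟩
  have keyA : cs s(Sum.inl x''', Sum.inr 7) = cs s(Sum.inl x, Sum.inr 0) :=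
    (Fin.val_injective key.1).symm
  have keyB : cs s(Sum.inl x'', Sum.inr 5) = cs s(Sum.inl x', Sum.inr 2) :=
    Fin.val_injective key.2
  have mH0 : s(Sum.inl x, Sum.inr 0) ∈ (blanusaInsert G x x' x'' x''').edgeSet :=
    memE _ _ (Set.mem_insert _ _) (by simp)
  have mH7 : s(Sum.inl x''', Sum.inr 7) ∈ (blanusaInsert G x x' x'' x''').edgeSet :=
    memE _ _ (Set.mem_insert_of_mem _ (Set.mem_insert _ _)) (by simp)
  have mH2 : s(Sum.inl x', Sum.inr 2) ∈ (blanusaInsert G x x' x'' x''').edgeSet :=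
    memE _ _ (Set.mem_insert_of_mem _ (Set.mem_insert_of_mem _ (Set.mem_insert _ _))) (by simp)
  have mH5 : s(Sum.inl x'', Sum.inr 5) ∈ (blanusaInsert G x x' x'' x''').edgeSet :=
    memE _ _ (Set.mem_insert_of_mem _ (Set.mem_insert_of_mem _ (Set.mem_insert_of_mem _ (Set.mem_insert _ _)))) (by simp)
  have hmapmem : ∀ g ∈ G.edgeSet, g ≠ s(x, x''') → g ≠ s(x', x'') →
      Sym2.map Sum.inl g ∈ (blanusaInsert G x x' x'' x''').edgeSet := by
    intro g hg hg1 hg2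
    rw [blanusaInsert, SimpleGraph.edgeSet_fromEdgeSet]
    exact ⟨Or.inl ⟨g, ⟨hg, by simp [hg1, hg2]⟩, rfl⟩, map_not_diag hg⟩
  have hmapinj : ∀ g1 g2 : Sym2 V,
      Sym2.map (Sum.inl : V → V ⊕ Fin 8) g1 = Sym2.map Sum.inl g2 → g1 = g2 := by
    intro g1 g2 hgg
    induction g1 using Sym2.ind with
    | _ a b =>
      rw [Sym2.map_pair_eq] at hgg
      obtain ⟨q, hq1, hq2⟩ := map_inl_eq hgg.symm
      rw [Sum.inl.injEq] at hq1
      rw [hq2, ← hq1]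
  have hhalf : ∀ g ∈ G.edgeSet, g ≠ s(x, x''') → g ≠ s(x', x'') → ∀ p, p ∈ g →
      ∀ (j : Fin 8), s(Sum.inl p, Sum.inr j) ∈ (blanusaInsert G x x' x'' x''').edgeSet →
      cs (Sym2.map Sum.inl g) ≠ cs s(Sum.inl p, Sum.inr j) := by
    intro g hg h1 h2 p hp j hj
    refine hcs _ (hmapmem g hg h1 h2) _ hj ?_
      ⟨Sum.inl p, Sym2.mem_map.mpr ⟨p, hp, rfl⟩, Sym2.mem_mk_left _ _⟩
    exact fun hh => inr_not_mem_map g j (hh ▸ Sym2.mem_mk_right _ _)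
  have hsp12 : s(x', x'') ≠ s(x, x''') := by simp [Sym2.eq_iff, hd1.symm, hd5]
  refine ⟨fun e => if e = s(x, x''') then cs s(Sum.inl x, Sum.inr 0)
    else if e = s(x', x'') then cs s(Sum.inl x', Sum.inr 2)
    else cs (Sym2.map Sum.inl e), ?_⟩
  have hvalue : ∀ g, g ≠ s(x, x''') → g ≠ s(x', x'') →
      (if g = s(x, x''') then cs s(Sum.inl x, Sum.inr 0)
        else if g = s(x', x'') then cs s(Sum.inl x', Sum.inr 2)
        else cs (Sym2.map Sum.inl g)) = cs (Sym2.map Sum.inl g) := by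
    intro g h1 h2
    rw [if_neg h1, if_neg h2]
  intro e he f hf hne hsh
  obtain ⟨v, hve, hvf⟩ := hsh
  dsimp only
  by_cases h1 : e = s(x, x''')
  · subst h1
    by_cases h3 : f = s(x', x'')
    · subst h3
      rcases Sym2.mem_iff.mp hve with rfl | rfl <;> rcases Sym2.mem_iff.mp hvf with h | h
      exacts [absurd h hd1, absurd h hd2, absurd h hd5.symm, absurd h hd6.symm]
    · by_cases h2 : f = s(x, x''')
      · exact absurd h2.symm hne
      rw [if_pos rfl, hvalue f h2 h3]
      rcases Sym2.mem_iff.mp hve with rfl | rfl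
      · exact (hhalf f hf h2 h3 _ hvf 0 mH0).symm
      · exact keyA ▸ (hhalf f hf h2 h3 _ hvf 7 mH7).symm
  by_cases h2 : e = s(x', x'')
  · subst h2
    by_cases h3 : f = s(x, x''')
    · subst h3
      rcases Sym2.mem_iff.mp hve with rfl | rfl <;> rcases Sym2.mem_iff.mp hvf with h | h
      exacts [absurd h hd1.symm, absurd h hd5, absurd h hd2.symm, absurd h hd6]
    · by_cases h4 : f = s(x', x'')
      · exact absurd h4.symm hne
      rw [if_neg hsp12, if_pos rfl, hvalue f h3 h4]
      rcases Sym2.mem_iff.mp hve with rfl | rfl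
      · exact (hhalf f hf h3 h4 _ hvf 2 mH2).symm
      · exact keyB ▸ (hhalf f hf h3 h4 _ hvf 5 mH5).symm
  rw [hvalue e h1 h2]
  by_cases h3 : f = s(x, x''')
  · subst h3
    rw [if_pos rfl]
    rcases Sym2.mem_iff.mp hvf with rfl | rfl
    · exact hhalf e he h1 h2 _ hve 0 mH0
    · exact keyA ▸ hhalf e he h1 h2 _ hve 7 mH7
  by_cases h4 : f = s(x', x'')
  · subst h4
    rw [if_neg hsp12, if_pos rfl]
    rcases Sym2.mem_iff.mp hvf with rfl | rfl
    · exact hhalf e he h1 h2 _ hve 2 mH2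
    · exact keyB ▸ hhalf e he h1 h2 _ hve 5 mH5
  rw [hvalue f h3 h4]
  exact hcs _ (hmapmem e he h1 h2) _ (hmapmem f hf h3 h4)
    (fun hh => hne (hmapinj _ _ hh))
    ⟨Sum.inl v, Sym2.mem_map.mpr ⟨v, hve, rfl⟩, Sym2.mem_map.mpr ⟨v, hvf, rfl⟩⟩

end BlanusaAux

/-- Let `G` be a 2-connected cubic graph drawn in the plane with exactly
one crossing, involving the edges `x x'''` and `x' x''` (so that `G` minus these two edges is
planar). Then the graph `G*` obtained by replacing the crossing by a Blanuša block `B₀` is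
3-edge-colourable iff `G` is. -/
theorem blanusaInsert_proper3EdgeColorable_iff
    {V : Type*} [Fintype V] (G : SimpleGraph V) (x x' x'' x''' : V)
    (hcubic : IsCubic G) (h2conn : IsTwoConnected G)
    (he1 : G.Adj x x''') (he2 : G.Adj x' x'')
    (hdist : [x, x', x'', x'''].Nodup)
    (hdraw : IsPlanar (G.deleteEdges {s(x, x'''), s(x', x'')})) :
    (Proper3EdgeColorable (blanusaInsert G x x' x'' x''') ↔ Proper3EdgeColorable G) := by
  have hd1 : x ≠ x' := fun hh => by rw [hh] at hdist; simp at hdist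
  have hd2 : x ≠ x'' := fun hh => by rw [hh] at hdist; simp at hdist
  have hd3 : x ≠ x''' := fun hh => by rw [hh] at hdist; simp at hdist
  have hd4 : x' ≠ x'' := fun hh => by rw [hh] at hdist; simp at hdist
  have hd5 : x' ≠ x''' := fun hh => by rw [hh] at hdist; simp at hdist
  have hd6 : x'' ≠ x''' := fun hh => by rw [hh] at hdist; simp at hdist
  constructor
  · exact star_forward G x x' x'' x''' hd1 hd2 hd3 hd4 hd5 hd6
  · rintro ⟨c, hc⟩
    exact ⟨starColor c (c s(x, x''')) (c s(x', x'')),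
      star_proper G x x' x'' x''' hd1 hd2 hd3 hd4 hd5 hd6 he1 he2 c hc _ _ rfl rfl⟩
end
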